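/- arXiv:2211.01164 — 8 statements merged into one kernel-verified Lean document; each statement's English description precedes it below -/
import Mathlib

section
/- Let n ≥ 2 and consider the set {1, ..., n} with its standard order. There is exactly one pair of relations (Perm, Pred) on {1,...,n} satisfying: (a) Perm is irreflexive; (b) Perm is a bijective function (every element has exactly one Perm-successor and exactly one Perm-predecessor); (c) Pred ⊆ Perm; (d) Pred(x,y) implies x ≤ y; (e) Pred has exactly n-1 pairs. Moreover, in this unique solution, Pred(x,y) holds iff y = x+1, and Perm is the cyclic successor (Perm(x, x+1) for x < n, and Perm(n, 1)). -/
open Classical in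
private lemma stmt4_card (n : ℕ) :
    Nat.card {q : Fin n × Fin n // ((q.2 : ℕ) = (q.1 : ℕ) + 1)} = n - 1 := by
  have e : {q : Fin n × Fin n // ((q.2 : ℕ) = (q.1 : ℕ) + 1)} ≃ Fin (n - 1) :=
    { toFun := fun q => ⟨q.1.1, by have h2 := q.1.2.isLt; have h3 := q.2; omega⟩
      invFun := fun i => ⟨(⟨i, by have := i.isLt; omega⟩, ⟨i + 1, by have := i.isLt; omega⟩), rfl⟩
      left_inv := fun q => by
        have h3 := q.2
        apply Subtype.ext
        apply Prod.ext
        · rfl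
        · exact Fin.ext h3.symm
      right_inv := fun i => rfl }
  rw [Nat.card_congr e, Nat.card_eq_fintype_card, Fintype.card_fin]

open Classical in
private lemma stmt4_key (n : ℕ) (hn : 2 ≤ n)
    (P : (Fin n → Fin n → Prop) × (Fin n → Fin n → Prop))
    (h : (∀ x, ¬ P.1 x x) ∧
       (∀ x, ∃! y, P.1 x y) ∧
       (∀ y, ∃! x, P.1 x y) ∧
       (∀ x y, P.2 x y → P.1 x y) ∧
       (∀ x y, P.2 x y → x ≤ y) ∧
       Nat.card {q : Fin n × Fin n // P.2 q.1 q.2} = n - 1) :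
    (∀ x y : Fin n, P.2 x y ↔ (y : ℕ) = (x : ℕ) + 1) ∧
    (∀ x y : Fin n, P.1 x y ↔
      ((y : ℕ) = (x : ℕ) + 1 ∨ ((x : ℕ) = n - 1 ∧ (y : ℕ) = 0))) := by
  obtain ⟨h1, h2, h3, h4, h5, h6⟩ := h
  choose σ hσ hσu using h2
  have hperm : ∀ x y, P.1 x y ↔ y = σ x := fun x y =>
    ⟨fun hx => hσu x y hx, fun e => e ▸ hσ x⟩
  set L : Fin n := ⟨n - 1, by omega⟩ with hL
  -- Pred implies strict increase
  have hlt : ∀ x y, P.2 x y → (x : ℕ) < (y : ℕ) := by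
    intro x y hxy
    have hle : (x : ℕ) ≤ (y : ℕ) := h5 x y hxy
    have hne : x ≠ y := by
      intro e; exact h1 x (e ▸ h4 x y hxy)
    have : (x : ℕ) ≠ (y : ℕ) := fun e => hne (Fin.ext e)
    omega
  -- counting argument
  set S : Set (Fin n) := {x | P.2 x (σ x)} with hS
  set T : Set (Fin n) := {x | x ≠ L} with hT
  have hsub : S ⊆ T := by
    intro x hx
    have h1' := hlt x (σ x) hx
    have h2' := (σ x).isLt
    intro e
    have : (x : ℕ) = n - 1 := by rw [e]
    omega
  have ecard : {q : Fin n × Fin n // P.2 q.1 q.2} ≃ ↥S :=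
    { toFun := fun q => ⟨q.1.1, by
        have hy : q.1.2 = σ q.1.1 := hσu _ _ (h4 _ _ q.2)
        show P.2 q.1.1 (σ q.1.1)
        rw [← hy]; exact q.2⟩
      invFun := fun x => ⟨(x.1, σ x.1), x.2⟩
      left_inv := fun q => by
        apply Subtype.ext
        apply Prod.ext
        · rfl
        · exact (hσu _ _ (h4 _ _ q.2)).symm
      right_inv := fun x => rfl }
  have cardS : S.ncard = n - 1 := by
    rw [← Nat.card_coe_set_eq, ← Nat.card_congr ecard, h6]
  have cardT : T.ncard = n - 1 := by
    rw [← Nat.card_coe_set_eq, Nat.card_eq_fintype_card]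
    have : Fintype.card {x : Fin n // ¬ (x = L)} = n - 1 := by
      rw [Fintype.card_subtype_compl, Fintype.card_subtype_eq, Fintype.card_fin]
    exact this
  have hST : S = T :=
    Set.eq_of_subset_of_ncard_le hsub (by omega) (Set.toFinite T)
  have hPredAll : ∀ x : Fin n, x ≠ L → P.2 x (σ x) := by
    intro x hx
    have : x ∈ T := hx
    rw [← hST] at this
    exact this
  have hlt' : ∀ x : Fin n, x ≠ L → (x : ℕ) < (σ x : ℕ) :=
    fun x hx => hlt x (σ x) (hPredAll x hx)
  -- σ L = 0
  have hσL : σ L = ⟨0, by omega⟩ := by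
    obtain ⟨x, hx, hxu⟩ := h3 ⟨0, by omega⟩
    have hxσ : σ x = ⟨0, by omega⟩ := (hσu x _ hx).symm
    have hxL : x = L := by
      by_contra hc
      have := hlt' x hc
      rw [hxσ] at this
      simp at this
    rw [← hxL, hxσ]
  -- σ x = x+1 (as naturals) whenever x+1 < n
  have hσm : ∀ m : ℕ, ∀ x : Fin n, (x : ℕ) = m → m + 1 < n → (σ x : ℕ) = m + 1 := by
    intro m
    induction m using Nat.strong_induction_on with
    | _ m ih =>
      intro x hx hm
      obtain ⟨z, hz, hzu⟩ := h3 ⟨m + 1, hm⟩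
      have hzσ : σ z = ⟨m + 1, hm⟩ := (hσu z _ hz).symm
      have hzval : (σ z : ℕ) = m + 1 := by rw [hzσ]
      have hzL : z ≠ L := by
        intro e
        rw [e] at hzval
        rw [hσL] at hzval
        simp at hzval
      have hzlt := hlt' z hzL
      have hzm : (z : ℕ) = m := by
        by_contra hc
        have hlt2 : (z : ℕ) < m := by omega
        have := ih (z : ℕ) hlt2 z rfl (by omega)
        omega
      have hexz : z = x := Fin.ext (by omega)
      rw [← hexz]
      exact hzval
  -- characterization of σ
  have hσchar : ∀ x : Fin n, ((x : ℕ) = n - 1 ∧ (σ x : ℕ) = 0) ∨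
      ((x : ℕ) + 1 < n ∧ (σ x : ℕ) = (x : ℕ) + 1) := by
    intro x
    by_cases hx : (x : ℕ) = n - 1
    · left
      refine ⟨hx, ?_⟩
      have : x = L := Fin.ext hx
      rw [this, hσL]
    · right
      have hlt2 : (x : ℕ) + 1 < n := by have := x.isLt; omega
      exact ⟨hlt2, hσm (x : ℕ) x rfl hlt2⟩
  constructor
  · intro x y
    constructor
    · intro hxy
      have hy : y = σ x := hσu x y (h4 x y hxy)
      have hlt2 := hlt x y hxy
      rcases hσchar x with ⟨hx1, hx2⟩ | ⟨hx1, hx2⟩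
      · rw [hy, hx2] at hlt2; omega
      · rw [hy, hx2]
    · intro hxy
      have hxL : x ≠ L := by
        intro e
        have : (x : ℕ) = n - 1 := by rw [e]
        have := y.isLt
        omega
      have hpred := hPredAll x hxL
      have : y = σ x := by
        rcases hσchar x with ⟨hx1, _⟩ | ⟨_, hx2⟩
        · exact absurd hx1 (by have := y.isLt; omega)
        · exact Fin.ext (by omega)
      rw [this]; exact hpred
  · intro x y
    rw [hperm]
    constructor
    · intro hy
      rcases hσchar x with ⟨hx1, hx2⟩ | ⟨hx1, hx2⟩
      · right; exact ⟨hx1, by rw [hy]; exact hx2⟩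
      · left; rw [hy]; exact hx2
    · intro hy
      rcases hσchar x with ⟨hx1, hx2⟩ | ⟨hx1, hx2⟩
      · rcases hy with hy | ⟨hy1, hy2⟩
        · omega
        · exact Fin.ext (by omega)
      · rcases hy with hy | ⟨hy1, hy2⟩
        · exact Fin.ext (by omega)
        · omega

/-- On `{1,...,n}` (modeled as `Fin n` with element `i` representing `i+1`), there is exactly
one pair of relations `(Perm, Pred)` satisfying the predecessor-theory axioms, and that unique
pair is the immediate-successor relation together with the cyclic successor. -/
theorem stmt4 (n : ℕ) (hn : 2 ≤ n) :
    (∃! P : (Fin n → Fin n → Prop) × (Fin n → Fin n → Prop),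
      (∀ x, ¬ P.1 x x) ∧
      (∀ x, ∃! y, P.1 x y) ∧
      (∀ y, ∃! x, P.1 x y) ∧
      (∀ x y, P.2 x y → P.1 x y) ∧
      (∀ x y, P.2 x y → x ≤ y) ∧
      Nat.card {q : Fin n × Fin n // P.2 q.1 q.2} = n - 1) ∧
    (∀ P : (Fin n → Fin n → Prop) × (Fin n → Fin n → Prop),
      ((∀ x, ¬ P.1 x x) ∧
       (∀ x, ∃! y, P.1 x y) ∧
       (∀ y, ∃! x, P.1 x y) ∧
       (∀ x y, P.2 x y → P.1 x y) ∧
       (∀ x y, P.2 x y → x ≤ y) ∧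
       Nat.card {q : Fin n × Fin n // P.2 q.1 q.2} = n - 1) →
      ((∀ x y : Fin n, P.2 x y ↔ (y : ℕ) = (x : ℕ) + 1) ∧
       (∀ x y : Fin n, P.1 x y ↔
         ((y : ℕ) = (x : ℕ) + 1 ∨ ((x : ℕ) = n - 1 ∧ (y : ℕ) = 0))))) := by
  set Perm0 : Fin n → Fin n → Prop :=
    fun x y => (y : ℕ) = (x : ℕ) + 1 ∨ ((x : ℕ) = n - 1 ∧ (y : ℕ) = 0) with hPerm0
  set Pred0 : Fin n → Fin n → Prop := fun x y => (y : ℕ) = (x : ℕ) + 1 with hPred0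
  have hax : (∀ x, ¬ Perm0 x x) ∧
      (∀ x, ∃! y, Perm0 x y) ∧
      (∀ y, ∃! x, Perm0 x y) ∧
      (∀ x y, Pred0 x y → Perm0 x y) ∧
      (∀ x y, Pred0 x y → x ≤ y) ∧
      Nat.card {q : Fin n × Fin n // Pred0 q.1 q.2} = n - 1 := by
    refine ⟨?_, ?_, ?_, ?_, ?_, ?_⟩
    · intro x hx
      rcases hx with hx | ⟨hx1, hx2⟩
      · omega
      · omega
    · intro x
      by_cases hx : (x : ℕ) = n - 1
      · refine ⟨⟨0, by omega⟩, Or.inr ⟨hx, rfl⟩, ?_⟩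
        intro y hy
        rcases hy with hy | ⟨hy1, hy2⟩
        · have := y.isLt; omega
        · exact Fin.ext hy2
      · refine ⟨⟨(x : ℕ) + 1, by have := x.isLt; omega⟩, Or.inl rfl, ?_⟩
        intro y hy
        rcases hy with hy | ⟨hy1, hy2⟩
        · exact Fin.ext hy
        · omega
    · intro y
      by_cases hy : (y : ℕ) = 0
      · refine ⟨⟨n - 1, by omega⟩, Or.inr ⟨rfl, hy⟩, ?_⟩
        intro x hx
        rcases hx with hx | ⟨hx1, hx2⟩
        · omega
        · exact Fin.ext hx1
      · refine ⟨⟨(y : ℕ) - 1, by have := y.isLt; omega⟩, Or.inl (by simp; omega), ?_⟩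
        intro x hx
        rcases hx with hx | ⟨hx1, hx2⟩
        · exact Fin.ext (by simp; omega)
        · omega
    · intro x y hxy; exact Or.inl hxy
    · intro x y hxy
      exact Fin.le_def.mpr (by omega)
    · exact stmt4_card n
  have key := stmt4_key n hn
  constructor
  · refine ⟨(Perm0, Pred0), hax, ?_⟩
    intro P hP
    obtain ⟨k1, k2⟩ := key P hP
    obtain ⟨P1, P2⟩ := P
    have e1 : P1 = Perm0 := funext fun x => funext fun y => propext (k2 x y)
    have e2 : P2 = Pred0 := funext fun x => funext fun y => propext (k1 x y)
    rw [e1, e2]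
  · exact key
end

section
/- Let n ≥ 4. Define σ on {1,...,n} by σ(i) = i+2 for i ≤ n-2, σ(n-1) = 1 and σ(n) = 2 if n is even, σ(n-1) = 2 and σ(n) = 1 if n is odd. Then σ is a fixed-point-free permutation of {1,...,n}, exactly two elements x satisfy σ(x) < x, and σ decomposes into exactly two cycles: one of length ⌊n/2⌋ and one of length ⌈n/2⌉. -/
private def resList (n r : ℕ) : List (Fin n) :=
  (List.range ((n + 1 - r) / 2)).pmap (fun j h => (⟨2 * j + r, h⟩ : Fin n))
    (fun j hj => by simp only [List.mem_range] at hj; omega)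

private lemma resList_length (n r : ℕ) : (resList n r).length = (n + 1 - r) / 2 := by
  simp [resList]

private lemma resList_getElem (n r j : ℕ) (hj : j < (n + 1 - r) / 2) (h2 : 2 * j + r < n) :
    (resList n r)[j]'(by rw [resList_length]; exact hj) = ⟨2 * j + r, h2⟩ := by
  simp [resList]

private lemma resList_val (n r i : ℕ) (hi : i < (resList n r).length) :
    (((resList n r)[i]'hi : Fin n) : ℕ) = 2 * i + r := by
  simp [resList]

private lemma resList_nodup (n r : ℕ) : (resList n r).Nodup := by
  refine List.Nodup.pmap ?_ List.nodup_range
  intro a ha b hb h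
  have := congrArg Fin.val h
  simp only at this
  omega

private lemma mem_resList (n r : ℕ) (hr : r < 2) (x : Fin n) :
    x ∈ resList n r ↔ (x : ℕ) % 2 = r := by
  simp only [resList, List.mem_pmap, List.mem_range]
  constructor
  · rintro ⟨j, hj, rfl⟩; simp; omega
  · intro h
    refine ⟨(x : ℕ) / 2, ?_, ?_⟩
    · have := x.isLt; omega
    · ext; simp; omega

private lemma resList_moves (n r : ℕ) (hn : 4 ≤ n) (hr : r < 2) (σ : Fin n → Fin n)
    (hσ : ∀ i : Fin n, (σ i : ℕ) =
      if (i : ℕ) ≤ n - 3 then (i : ℕ) + 2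
      else if n % 2 = 0 then (if (i : ℕ) = n - 2 then 0 else 1)
      else (if (i : ℕ) = n - 2 then 1 else 0))
    (x : Fin n) (hx : (x : ℕ) % 2 = r) :
    (resList n r).formPerm x = σ x ∧ ((σ x : ℕ)) % 2 = r := by
  have hxlt := x.isLt
  set j := (x : ℕ) / 2 with hjdef
  have hj : j < (n + 1 - r) / 2 := by omega
  have h2 : 2 * j + r < n := by omega
  have hval : (x : ℕ) = 2 * j + r := by omega
  have hxeq : x = ⟨2 * j + r, h2⟩ := Fin.ext hval
  constructor
  · conv_lhs => rw [hxeq, ← resList_getElem n r j hj h2]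
    rw [List.formPerm_apply_getElem _ (resList_nodup n r)]
    apply Fin.ext
    rw [hσ x, resList_val]
    simp only [resList_length]
    by_cases hlt : j + 1 < (n + 1 - r) / 2
    · rw [Nat.mod_eq_of_lt hlt]
      split_ifs <;> omega
    · have hje : j + 1 = (n + 1 - r) / 2 := by omega
      rw [hje, Nat.mod_self]
      split_ifs <;> omega
  · rw [hσ x]
    split_ifs <;> omega

/-- For `n ≥ 4`, the map on `{1,...,n}` (as `Fin n`, element `i` representing `i+1`) sending
`i ↦ i+2` for `i ≤ n-2`, with `n-1 ↦ 1, n ↦ 2` for even `n` and `n-1 ↦ 2, n ↦ 1` for odd `n`,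
is a fixed-point-free permutation with exactly two descents, decomposing into exactly two
cycles of lengths `⌊n/2⌋` and `⌈n/2⌉`. -/
theorem stmt7 (n : ℕ) (hn : 4 ≤ n) (σ : Fin n → Fin n)
    (hσ : ∀ i : Fin n, (σ i : ℕ) =
      if (i : ℕ) ≤ n - 3 then (i : ℕ) + 2
      else if n % 2 = 0 then (if (i : ℕ) = n - 2 then 0 else 1)
      else (if (i : ℕ) = n - 2 then 1 else 0)) :
    Function.Bijective σ ∧
    (∀ x, σ x ≠ x) ∧
    (Finset.univ.filter fun x : Fin n => σ x < x).card = 2 ∧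
    ∃ e : Equiv.Perm (Fin n), ⇑e = σ ∧ e.cycleType = {n / 2, (n + 1) / 2} := by
  have len0 : (resList n 0).length = (n + 1) / 2 := by simpa using resList_length n 0
  have len1 : (resList n 1).length = n / 2 := by simpa using resList_length n 1
  have hlen0 : 2 ≤ (resList n 0).length := by rw [len0]; omega
  have hlen1 : 2 ≤ (resList n 1).length := by rw [len1]; omega
  have hdisj : (resList n 0).formPerm.Disjoint (resList n 1).formPerm := by
    rw [List.formPerm_disjoint_iff (resList_nodup n 0) (resList_nodup n 1) hlen0 hlen1]
    intro x hx0 hx1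
    rw [mem_resList n 0 (by omega) x] at hx0
    rw [mem_resList n 1 (by omega) x] at hx1
    omega
  have he : ⇑((resList n 0).formPerm * (resList n 1).formPerm) = σ := by
    funext x
    by_cases hpar : (x : ℕ) % 2 = 0
    · have hm := resList_moves n 0 hn (by omega) σ hσ x hpar
      have hfix : (resList n 1).formPerm x = x :=
        List.formPerm_apply_of_notMem (by rw [mem_resList n 1 (by omega)]; omega)
      simp [Equiv.Perm.mul_apply, hfix, hm.1]
    · have hp1 : (x : ℕ) % 2 = 1 := by omega
      have hm := resList_moves n 1 hn (by omega) σ hσ x hp1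
      have hm2 := hm.2
      have hfix : (resList n 0).formPerm (σ x) = σ x :=
        List.formPerm_apply_of_notMem (by rw [mem_resList n 0 (by omega)]; omega)
      simp [Equiv.Perm.mul_apply, hm.1, hfix]
  refine ⟨?_, ?_, ?_, ?_⟩
  · rw [← he]; exact ((resList n 0).formPerm * (resList n 1).formPerm).bijective
  · intro x h
    have hs := hσ x
    rw [h] at hs
    have := x.isLt
    split_ifs at hs <;> omega
  · have hset : (Finset.univ.filter fun x : Fin n => σ x < x)
        = {⟨n - 2, by omega⟩, ⟨n - 1, by omega⟩} := by
      ext x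
      have hx := x.isLt
      simp only [Finset.mem_filter, Finset.mem_univ, true_and, Finset.mem_insert,
        Finset.mem_singleton, Fin.lt_def, Fin.ext_iff, hσ x]
      split_ifs <;> omega
    rw [hset, Finset.card_insert_of_notMem (by simp [Fin.ext_iff]; omega)]
    simp
  · refine ⟨(resList n 0).formPerm * (resList n 1).formPerm, he, ?_⟩
    rw [hdisj.cycleType_mul,
      (List.isCycle_formPerm (resList_nodup n 0) hlen0).cycleType,
      (List.isCycle_formPerm (resList_nodup n 1) hlen1).cycleType,
      List.support_formPerm_of_nodup _ (resList_nodup n 0)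
        (by intro x hx; rw [hx] at hlen0; simp at hlen0),
      List.support_formPerm_of_nodup _ (resList_nodup n 1)
        (by intro x hx; rw [hx] at hlen1; simp at hlen1),
      List.card_toFinset, List.card_toFinset,
      (resList_nodup n 0).dedup, (resList_nodup n 1).dedup, len0, len1,
      Multiset.pair_comm (n / 2) ((n + 1) / 2)]
    rfl
end

section
/- Let σ be a fixed-point-free permutation of {1,...,n} (n ≥ 4) such that: (a) exactly two elements x satisfy σ(x) < x; (b) σ preserves parity (σ(x) ≡ x mod 2 for all x). Then σ(i) = i + 2 for all i ≤ n - 2. -/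
/-- A fixed-point-free permutation of `{1,...,n}` (`n ≥ 4`, as `Fin n`) with exactly two
descent pairs which preserves parity satisfies `σ i = i + 2` for all `i ≤ n - 2`
(in 1-based indexing; here `i` ranges over `Fin n` with `(i : ℕ) ≤ n - 3`). -/
theorem stmt9 (n : ℕ) (hn : 4 ≤ n) (σ : Equiv.Perm (Fin n))
    (hfp : ∀ x, σ x ≠ x)
    (hdesc : (Finset.univ.filter fun x : Fin n => σ x < x).card = 2)
    (hpar : ∀ x : Fin n, (σ x : ℕ) % 2 = (x : ℕ) % 2) :
    ∀ i : Fin n, (i : ℕ) ≤ n - 3 → (σ i : ℕ) = (i : ℕ) + 2 := by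
  -- the two largest elements are descents
  set a : Fin n := ⟨n - 1, by omega⟩ with ha_def
  set b : Fin n := ⟨n - 2, by omega⟩ with hb_def
  have hfpv : ∀ x : Fin n, (σ x : ℕ) ≠ (x : ℕ) := by
    intro x hx
    exact hfp x (Fin.ext hx)
  have hav : (a : ℕ) = n - 1 := rfl
  have hbv : (b : ℕ) = n - 2 := rfl
  have ha : σ a < a := by
    have h1 := hfpv a
    have h2 := (σ a).isLt
    rw [hav] at h1
    simp only [Fin.lt_def, hav]
    omega
  have hb : σ b < b := by
    have h1 := hfpv b
    have h2 := (σ b).isLt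
    have h3 := hpar b
    rw [hbv] at h1 h3
    simp only [Fin.lt_def, hbv]
    omega
  have hab : a ≠ b := by
    intro h
    have := congrArg Fin.val h
    rw [hav, hbv] at this
    omega
  have hsub : ({a, b} : Finset (Fin n)) ⊆ Finset.univ.filter fun x : Fin n => σ x < x := by
    intro x hx
    simp only [Finset.mem_insert, Finset.mem_singleton] at hx
    rcases hx with rfl | rfl <;> simp [Finset.mem_filter, ha, hb]
  have hD : ({a, b} : Finset (Fin n)) = Finset.univ.filter fun x : Fin n => σ x < x :=
    Finset.eq_of_subset_of_card_le hsub (by rw [hdesc, Finset.card_pair hab])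
  -- hence every x ≤ n-3 satisfies σ x > x, so σ x ≥ x + 2 by parity
  have hgt : ∀ x : Fin n, (x : ℕ) ≤ n - 3 → (x : ℕ) + 2 ≤ (σ x : ℕ) := by
    intro x hx
    have hxD : x ∉ Finset.univ.filter fun x : Fin n => σ x < x := by
      rw [← hD]
      simp only [Finset.mem_insert, Finset.mem_singleton]
      rintro (rfl | rfl) <;> [rw [hav] at hx; rw [hbv] at hx] <;> omega
    simp only [Finset.mem_filter, Finset.mem_univ, true_and, Fin.lt_def, not_lt] at hxD
    have := hfpv x
    have := hpar x
    omega
  -- downward strong induction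
  have key : ∀ k, ∀ j : Fin n, (j : ℕ) ≤ n - 3 → n - 3 - (j : ℕ) = k → (σ j : ℕ) = (j : ℕ) + 2 := by
    intro k
    induction k using Nat.strong_induction_on with
    | _ k IH =>
      intro j hj hk
      have h2 := hgt j hj
      have h3 := hpar j
      have h4 := (σ j).isLt
      by_contra hne
      -- then σ j ≥ j + 4
      have h5 : (j : ℕ) + 4 ≤ (σ j : ℕ) := by omega
      set y : ℕ := (σ j : ℕ) with hy
      have hy2 : y - 2 < n := by omega
      set j' : Fin n := ⟨y - 2, hy2⟩ with hj'
      have hj'le : (j' : ℕ) ≤ n - 3 := by simp only [hj']; omega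
      have hIH : (σ j' : ℕ) = (j' : ℕ) + 2 :=
        IH (n - 3 - (y - 2)) (by omega) j' hj'le rfl
      have : σ j' = σ j := by
        apply Fin.ext
        rw [hIH]; show y - 2 + 2 = y
        omega
      have := σ.injective this
      have := congrArg Fin.val this
      simp only [hj'] at this
      omega
  intro i hi
  exact key (n - 3 - (i : ℕ)) i hi rfl
end

section
/- Define T_i : {k ∈ ℕ^p : |k| = i} → ℝ recursively by T_1(δ_j) = w_j for each j ∈ [p], and T_{i+1}(u) = Σ_{j ∈ [p], u_j ≥ 1} T_i(u - δ_j) · w_j · Π_{l=1}^p r_{jl}^{(u - δ_j)_l}, where r is a symmetric p×p matrix of reals and w ∈ ℝ^p. Then for all i ≥ 1 and all k ∈ ℕ^p with |k| = i, T_i(k) = (i choose k) · Π_{a<b} r_{ab}^{k_a k_b} · Π_{a=1}^p r_{aa}^{C(k_a, 2)} · w_a^{k_a}. -/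
open Finset

section Aux

variable {p : ℕ}

private lemma sub_single_ne' (k : Fin p → ℕ) {j l : Fin p} (h : l ≠ j) :
    (k - Pi.single j 1 : Fin p → ℕ) l = k l := by
  simp [Pi.single_apply, h]

private lemma sub_single_eq' (k : Fin p → ℕ) (j : Fin p) :
    (k - Pi.single j 1 : Fin p → ℕ) j = k j - 1 := by
  simp [Pi.single_apply]

private lemma sum_sub_single' (k : Fin p → ℕ) (j : Fin p) (h : 1 ≤ k j) :
    (∑ a, (k - Pi.single j 1 : Fin p → ℕ) a) + 1 = ∑ a, k a := by
  rw [← Finset.add_sum_erase _ _ (mem_univ j), ← Finset.add_sum_erase _ k (mem_univ j)]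
  have h1 : ∑ a ∈ univ.erase j, (k - Pi.single j 1 : Fin p → ℕ) a
      = ∑ a ∈ univ.erase j, k a :=
    Finset.sum_congr rfl fun a ha => sub_single_ne' k (Finset.mem_erase.mp ha).1
  rw [h1, sub_single_eq']
  omega

private lemma mult_step' (k : Fin p → ℕ) (j : Fin p) (h : 1 ≤ k j) :
    Nat.multinomial univ k * k j
      = (∑ a, k a) * Nat.multinomial univ (k - Pi.single j 1 : Fin p → ℕ) := by
  have hpos : 0 < ∏ a, Nat.factorial ((k - Pi.single j 1 : Fin p → ℕ) a) :=
    Finset.prod_pos fun _ _ => Nat.factorial_pos _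
  apply Nat.eq_of_mul_eq_mul_right hpos
  have hprod : (∏ a, Nat.factorial ((k - Pi.single j 1 : Fin p → ℕ) a)) * k j
      = ∏ a, Nat.factorial (k a) := by
    rw [← Finset.mul_prod_erase _ _ (mem_univ j),
      ← Finset.mul_prod_erase _ (fun a => Nat.factorial (k a)) (mem_univ j)]
    have h1 : ∏ a ∈ univ.erase j, Nat.factorial ((k - Pi.single j 1 : Fin p → ℕ) a)
        = ∏ a ∈ univ.erase j, Nat.factorial (k a) :=
      Finset.prod_congr rfl fun a ha => by rw [sub_single_ne' k (Finset.mem_erase.mp ha).1]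
    rw [h1, sub_single_eq']
    obtain ⟨m, hm⟩ : ∃ m, k j = m + 1 := ⟨k j - 1, by omega⟩
    rw [hm]
    simp [Nat.factorial_succ]
    ring
  calc Nat.multinomial univ k * k j * ∏ a, Nat.factorial ((k - Pi.single j 1 : Fin p → ℕ) a)
      = (∏ a, Nat.factorial (k a)) * Nat.multinomial univ k := by
        rw [← hprod]; ring
    _ = Nat.factorial (∑ a, k a) := Nat.multinomial_spec _ _
    _ = (∑ a, k a) * Nat.factorial (∑ a, (k - Pi.single j 1 : Fin p → ℕ) a) := by
        rw [← sum_sub_single' k j h]; rw [Nat.factorial_succ]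
    _ = (∑ a, k a) * Nat.multinomial univ (k - Pi.single j 1 : Fin p → ℕ)
          * ∏ a, Nat.factorial ((k - Pi.single j 1 : Fin p → ℕ) a) := by
        rw [← Nat.multinomial_spec]; ring

private lemma mult_pascal' (k : Fin p → ℕ) (h : 1 ≤ ∑ a, k a) :
    (∑ j, if 1 ≤ k j then Nat.multinomial univ (k - Pi.single j 1 : Fin p → ℕ) else 0)
      = Nat.multinomial univ k := by
  apply Nat.eq_of_mul_eq_mul_left h
  rw [Finset.mul_sum]
  have step : ∀ j ∈ univ,
      (∑ a, k a) * (if 1 ≤ k j then Nat.multinomial univ (k - Pi.single j 1 : Fin p → ℕ) else 0)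
      = Nat.multinomial univ k * k j := by
    intro j _
    split
    · rw [← mult_step' k j ‹_›]
    · have : k j = 0 := by omega
      simp [this]
  rw [Finset.sum_congr rfl step, ← Finset.mul_sum]
  exact mul_comm _ _

private lemma prod_split' (f : Fin p → ℝ) (j : Fin p) :
    ∏ l, f l = (∏ a ∈ univ.filter (· < j), f a) * f j * ∏ b ∈ univ.filter (j < ·), f b := by
  have h1 : univ.filter (fun l : Fin p => ¬ l < j) = insert j (univ.filter (j < ·)) := by
    ext l
    simp only [mem_filter, mem_univ, true_and, mem_insert, not_lt]
    constructor
    · intro hl; rcases eq_or_lt_of_le hl with h | h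
      · exact Or.inl h.symm
      · exact Or.inr h
    · rintro (rfl | hl)
      · exact le_refl _
      · exact le_of_lt hl
  rw [← Finset.prod_filter_mul_prod_filter_not univ (· < j) f, h1,
    Finset.prod_insert (by simp)]
  ring

private lemma pair_prod' (r : Fin p → Fin p → ℝ) (k : Fin p → ℕ) (j : Fin p) (h : 1 ≤ k j) :
    (∏ x ∈ univ.filter (fun x : Fin p × Fin p => x.1 < x.2), r x.1 x.2 ^ (k x.1 * k x.2))
    = (∏ x ∈ univ.filter (fun x : Fin p × Fin p => x.1 < x.2),
        r x.1 x.2 ^ ((k - Pi.single j 1 : Fin p → ℕ) x.1 * (k - Pi.single j 1 : Fin p → ℕ) x.2))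
      * (∏ b ∈ univ.filter (j < ·), r j b ^ (k - Pi.single j 1 : Fin p → ℕ) b)
      * (∏ a ∈ univ.filter (· < j), r a j ^ (k - Pi.single j 1 : Fin p → ℕ) a) := by
  have step : ∀ x ∈ univ.filter (fun x : Fin p × Fin p => x.1 < x.2),
      r x.1 x.2 ^ (k x.1 * k x.2)
      = r x.1 x.2 ^ ((k - Pi.single j 1 : Fin p → ℕ) x.1 * (k - Pi.single j 1 : Fin p → ℕ) x.2)
        * (if x.1 = j then r x.1 x.2 ^ (k - Pi.single j 1 : Fin p → ℕ) x.2 else 1)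
        * (if x.2 = j then r x.1 x.2 ^ (k - Pi.single j 1 : Fin p → ℕ) x.1 else 1) := by
    intro x hx
    have hlt : x.1 < x.2 := (mem_filter.mp hx).2
    rcases eq_or_ne x.1 j with h1 | h1 <;> rcases eq_or_ne x.2 j with h2 | h2
    · exact absurd (h1.trans h2.symm) (ne_of_lt hlt)
    · have e1 : k x.1 = (k - Pi.single j 1 : Fin p → ℕ) x.1 + 1 := by
        rw [h1, sub_single_eq']; omega
      have e2 : k x.2 = (k - Pi.single j 1 : Fin p → ℕ) x.2 := (sub_single_ne' k h2).symm
      rw [if_pos h1, if_neg h2, e1, e2, mul_one, ← pow_add]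
      congr 1; ring
    · have e1 : k x.1 = (k - Pi.single j 1 : Fin p → ℕ) x.1 := (sub_single_ne' k h1).symm
      have e2 : k x.2 = (k - Pi.single j 1 : Fin p → ℕ) x.2 + 1 := by
        rw [h2, sub_single_eq']; omega
      rw [if_neg h1, if_pos h2, e1, e2, mul_one, ← pow_add, Nat.mul_succ]
    · have e1 : k x.1 = (k - Pi.single j 1 : Fin p → ℕ) x.1 := (sub_single_ne' k h1).symm
      have e2 : k x.2 = (k - Pi.single j 1 : Fin p → ℕ) x.2 := (sub_single_ne' k h2).symm
      rw [if_neg h1, if_neg h2, e1, e2]; ring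
  rw [Finset.prod_congr rfl step, Finset.prod_mul_distrib, Finset.prod_mul_distrib]
  congr 1
  · congr 1
    rw [← Finset.prod_filter]
    have himg : (univ.filter (fun x : Fin p × Fin p => x.1 < x.2)).filter (fun x => x.1 = j)
        = (univ.filter (fun b : Fin p => j < b)).image (fun b => (j, b)) := by
      ext x
      simp only [Finset.filter_filter, mem_filter, mem_univ, true_and, mem_image]
      constructor
      · rintro ⟨hlt, h1⟩
        exact ⟨x.2, h1 ▸ hlt, Prod.ext h1.symm rfl⟩
      · rintro ⟨b, hb, rfl⟩
        exact ⟨hb, rfl⟩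
    rw [himg, Finset.prod_image (by intro a _ b _ hab; exact ((Prod.mk.injEq _ _ _ _).mp hab).2)]
  · rw [← Finset.prod_filter]
    have himg : (univ.filter (fun x : Fin p × Fin p => x.1 < x.2)).filter (fun x => x.2 = j)
        = (univ.filter (fun a : Fin p => a < j)).image (fun a => (a, j)) := by
      ext x
      simp only [Finset.filter_filter, mem_filter, mem_univ, true_and, mem_image]
      constructor
      · rintro ⟨hlt, h2⟩
        exact ⟨x.1, h2 ▸ hlt, Prod.ext rfl h2.symm⟩
      · rintro ⟨a, ha, rfl⟩
        exact ⟨ha, rfl⟩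
    rw [himg, Finset.prod_image (by intro a _ b _ hab; exact ((Prod.mk.injEq _ _ _ _).mp hab).1)]

private lemma diag_prod' (r : Fin p → Fin p → ℝ) (w : Fin p → ℝ) (k : Fin p → ℕ) (j : Fin p)
    (h : 1 ≤ k j) :
    (∏ a, r a a ^ Nat.choose (k a) 2 * w a ^ k a)
    = (∏ a, r a a ^ Nat.choose ((k - Pi.single j 1 : Fin p → ℕ) a) 2
          * w a ^ (k - Pi.single j 1 : Fin p → ℕ) a)
      * (r j j ^ (k - Pi.single j 1 : Fin p → ℕ) j * w j) := by
  conv_lhs => rw [← Finset.mul_prod_erase _ _ (mem_univ j)]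
  conv_rhs => rw [← Finset.mul_prod_erase _ _ (mem_univ j)]
  have herase : ∏ a ∈ univ.erase j,
        r a a ^ Nat.choose ((k - Pi.single j 1 : Fin p → ℕ) a) 2
          * w a ^ (k - Pi.single j 1 : Fin p → ℕ) a
      = ∏ a ∈ univ.erase j, r a a ^ Nat.choose (k a) 2 * w a ^ k a := by
    refine Finset.prod_congr rfl fun a ha => ?_
    rw [sub_single_ne' k (Finset.mem_erase.mp ha).1]
  rw [herase]
  have e : k j = (k - Pi.single j 1 : Fin p → ℕ) j + 1 := by rw [sub_single_eq']; omega
  have hch : Nat.choose ((k - Pi.single j 1 : Fin p → ℕ) j + 1) 2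
      = Nat.choose ((k - Pi.single j 1 : Fin p → ℕ) j) 2
        + (k - Pi.single j 1 : Fin p → ℕ) j := by
    rw [Nat.choose_succ_succ, Nat.choose_one_right, Nat.add_comm]
  rw [e, hch, pow_add, pow_succ]
  ring

private lemma weight_step' (r : Fin p → Fin p → ℝ) (w : Fin p → ℝ)
    (hsym : ∀ a b, r a b = r b a) (k : Fin p → ℕ) (j : Fin p) (h : 1 ≤ k j) :
    ((∏ x ∈ univ.filter (fun x : Fin p × Fin p => x.1 < x.2),
        r x.1 x.2 ^ ((k - Pi.single j 1 : Fin p → ℕ) x.1 * (k - Pi.single j 1 : Fin p → ℕ) x.2))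
      * ∏ a, r a a ^ Nat.choose ((k - Pi.single j 1 : Fin p → ℕ) a) 2
          * w a ^ (k - Pi.single j 1 : Fin p → ℕ) a)
      * w j * ∏ l, (r j l) ^ ((k - Pi.single j 1 : Fin p → ℕ) l)
    = (∏ x ∈ univ.filter (fun x : Fin p × Fin p => x.1 < x.2), r x.1 x.2 ^ (k x.1 * k x.2))
      * ∏ a, r a a ^ Nat.choose (k a) 2 * w a ^ k a := by
  have hsplit : (∏ l, (r j l) ^ ((k - Pi.single j 1 : Fin p → ℕ) l))
      = (∏ a ∈ univ.filter (· < j), r j a ^ (k - Pi.single j 1 : Fin p → ℕ) a)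
        * r j j ^ (k - Pi.single j 1 : Fin p → ℕ) j
        * ∏ b ∈ univ.filter (j < ·), r j b ^ (k - Pi.single j 1 : Fin p → ℕ) b :=
    prod_split' (fun l => r j l ^ (k - Pi.single j 1 : Fin p → ℕ) l) j
  rw [pair_prod' r k j h, diag_prod' r w k j h, hsplit]
  have hsymprod : ∏ a ∈ univ.filter (· < j), r a j ^ (k - Pi.single j 1 : Fin p → ℕ) a
      = ∏ a ∈ univ.filter (· < j), r j a ^ (k - Pi.single j 1 : Fin p → ℕ) a :=
    Finset.prod_congr rfl fun a _ => by rw [hsym]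
  rw [hsymprod]
  ring

private lemma eq_single_of_sum_eq_one (k : Fin p → ℕ) (h : ∑ a, k a = 1) :
    ∃ j, k = Pi.single j 1 := by
  have h1 : ∃ j, 1 ≤ k j := by
    by_contra hc
    push_neg at hc
    have : ∑ a, k a = 0 := Finset.sum_eq_zero fun a _ => by have := hc a; omega
    omega
  obtain ⟨j, hj⟩ := h1
  refine ⟨j, funext fun a => ?_⟩
  rcases eq_or_ne a j with rfl | ha
  · have hle : k a ≤ ∑ x, k x := Finset.single_le_sum (fun _ _ => Nat.zero_le _) (mem_univ a)
    rw [Pi.single_eq_same]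
    omega
  · have hsum : k j + ∑ x ∈ univ.erase j, k x = ∑ x, k x :=
      Finset.add_sum_erase _ k (mem_univ j)
    have hle : k a ≤ ∑ x ∈ univ.erase j, k x :=
      Finset.single_le_sum (fun _ _ => Nat.zero_le _) (Finset.mem_erase.mpr ⟨ha, mem_univ a⟩)
    rw [Pi.single_eq_of_ne ha]
    omega

end Aux

/-- The table of the IncrementalWFOMC dynamic programming algorithm:
`T 1 (δ_j) = w j` and
`T (i+1) u = ∑_{j, u j ≥ 1} T i (u - δ_j) * w j * ∏ l, (r j l) ^ ((u - δ_j) l)`. -/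
noncomputable def T {p : ℕ} (r : Fin p → Fin p → ℝ) (w : Fin p → ℝ) :
    ℕ → (Fin p → ℕ) → ℝ
  | 0, _ => 0
  | 1, k => ∑ j : Fin p, if k = Pi.single j 1 then w j else 0
  | (i + 2), k => ∑ j : Fin p,
      if 1 ≤ k j then
        T r w (i + 1) (k - Pi.single j 1) * w j *
          ∏ l : Fin p, (r j l) ^ ((k - Pi.single j 1 : Fin p → ℕ) l)
      else 0

/-- Correctness invariant of IncrementalWFOMC: for a symmetric matrix `r`, for all `i ≥ 1`
and all p-vectors `k` with `|k| = i`,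
`T i k = (i choose k) * ∏_{a<b} r a b ^ (k a * k b) * ∏ a, r a a ^ C(k a, 2) * w a ^ k a`. -/
theorem stmt10 {p : ℕ} (r : Fin p → Fin p → ℝ) (w : Fin p → ℝ)
    (hsym : ∀ a b, r a b = r b a) :
    ∀ i : ℕ, 1 ≤ i → ∀ k : Fin p → ℕ, (∑ a, k a) = i →
      T r w i k = (Nat.multinomial Finset.univ k : ℝ) *
        (∏ x ∈ Finset.univ.filter (fun x : Fin p × Fin p => x.1 < x.2),
          r x.1 x.2 ^ (k x.1 * k x.2)) *
        ∏ a : Fin p, r a a ^ Nat.choose (k a) 2 * w a ^ (k a) := by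
  intro i
  induction i with
  | zero => intro h; exact absurd h (by omega)
  | succ n ih =>
    intro _ k hk
    cases n with
    | zero =>
      obtain ⟨j, rfl⟩ := eq_single_of_sum_eq_one k hk
      have hL : T r w 1 (Pi.single j 1) = w j := by
        rw [T]
        rw [Finset.sum_eq_single_of_mem j (mem_univ j) ?_, if_pos rfl]
        intro b _ hb
        rw [if_neg]
        intro heq
        have := congrFun heq j
        rw [Pi.single_eq_same, Pi.single_eq_of_ne (Ne.symm hb)] at this
        exact one_ne_zero this
      have hm : Nat.multinomial univ (Pi.single j 1 : Fin p → ℕ) = 1 := by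
        have hspec := Nat.multinomial_spec univ (Pi.single j 1 : Fin p → ℕ)
        have hprod : (∏ a, Nat.factorial ((Pi.single j 1 : Fin p → ℕ) a)) = 1 := by
          refine Finset.prod_eq_one fun a _ => ?_
          rcases eq_or_ne a j with rfl | ha
          · rw [Pi.single_eq_same]; rfl
          · rw [Pi.single_eq_of_ne ha]; rfl
        rw [hprod, hk, one_mul] at hspec
        simpa using hspec
      have hP : (∏ x ∈ univ.filter (fun x : Fin p × Fin p => x.1 < x.2),
          r x.1 x.2 ^ ((Pi.single j 1 : Fin p → ℕ) x.1 * (Pi.single j 1 : Fin p → ℕ) x.2)) = 1 := by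
        refine Finset.prod_eq_one fun x hx => ?_
        have hlt : x.1 < x.2 := (mem_filter.mp hx).2
        rcases eq_or_ne x.1 j with h1 | h1
        · have h2 : x.2 ≠ j := fun hc => (ne_of_lt hlt) (h1.trans hc.symm)
          rw [Pi.single_eq_of_ne h2, Nat.mul_zero, pow_zero]
        · rw [Pi.single_eq_of_ne h1, Nat.zero_mul, pow_zero]
      have hD : (∏ a, r a a ^ Nat.choose ((Pi.single j 1 : Fin p → ℕ) a) 2
            * w a ^ ((Pi.single j 1 : Fin p → ℕ) a)) = w j := by
        rw [Finset.prod_eq_single_of_mem j (mem_univ j) ?_]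
        · rw [Pi.single_eq_same]
          norm_num
        · intro b _ hb
          rw [Pi.single_eq_of_ne hb]
          norm_num
      rw [hL, hm, hP, hD]
      norm_num
    | succ m =>
      rw [T]
      have hstep : ∀ j ∈ univ,
          (if 1 ≤ k j then
            T r w (m + 1) (k - Pi.single j 1) * w j *
              ∏ l : Fin p, (r j l) ^ ((k - Pi.single j 1 : Fin p → ℕ) l)
          else 0)
          = (if 1 ≤ k j then
              (Nat.multinomial univ (k - Pi.single j 1 : Fin p → ℕ) : ℝ) else 0) *
            ((∏ x ∈ univ.filter (fun x : Fin p × Fin p => x.1 < x.2),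
                r x.1 x.2 ^ (k x.1 * k x.2)) *
              ∏ a, r a a ^ Nat.choose (k a) 2 * w a ^ (k a)) := by
        intro j _
        by_cases hj : 1 ≤ k j
        · rw [if_pos hj, if_pos hj]
          have hsum : (∑ a, (k - Pi.single j 1 : Fin p → ℕ) a) = m + 1 := by
            have := sum_sub_single' k j hj
            omega
          rw [ih (by omega) _ hsum]
          calc ((Nat.multinomial univ (k - Pi.single j 1 : Fin p → ℕ) : ℝ) *
                (∏ x ∈ univ.filter (fun x : Fin p × Fin p => x.1 < x.2),
                  r x.1 x.2 ^ ((k - Pi.single j 1 : Fin p → ℕ) x.1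
                    * (k - Pi.single j 1 : Fin p → ℕ) x.2)) *
                ∏ a, r a a ^ Nat.choose ((k - Pi.single j 1 : Fin p → ℕ) a) 2
                  * w a ^ ((k - Pi.single j 1 : Fin p → ℕ) a)) * w j *
              ∏ l : Fin p, (r j l) ^ ((k - Pi.single j 1 : Fin p → ℕ) l)
              = (Nat.multinomial univ (k - Pi.single j 1 : Fin p → ℕ) : ℝ) *
                (((∏ x ∈ univ.filter (fun x : Fin p × Fin p => x.1 < x.2),
                  r x.1 x.2 ^ ((k - Pi.single j 1 : Fin p → ℕ) x.1
                    * (k - Pi.single j 1 : Fin p → ℕ) x.2)) *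
                  ∏ a, r a a ^ Nat.choose ((k - Pi.single j 1 : Fin p → ℕ) a) 2
                    * w a ^ ((k - Pi.single j 1 : Fin p → ℕ) a)) * w j *
                  ∏ l : Fin p, (r j l) ^ ((k - Pi.single j 1 : Fin p → ℕ) l)) := by
                ring
            _ = _ := by rw [weight_step' r w hsym k j hj]
        · rw [if_neg hj, if_neg hj, zero_mul]
      rw [Finset.sum_congr rfl hstep, ← Finset.sum_mul]
      have hcast : (∑ j, if 1 ≤ k j then
            (Nat.multinomial univ (k - Pi.single j 1 : Fin p → ℕ) : ℝ) else 0)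
          = ((∑ j, if 1 ≤ k j then
              Nat.multinomial univ (k - Pi.single j 1 : Fin p → ℕ) else 0 : ℕ) : ℝ) := by
        rw [Nat.cast_sum]
        refine Finset.sum_congr rfl fun j _ => ?_
        split <;> simp
      rw [hcast, mult_pascal' k (by omega), mul_assoc]
end

section
/- Let r be a symmetric p×p real matrix, w ∈ ℝ^p, and n ≥ 1. Then Σ_{k ∈ ℕ^p, |k| = n} (n choose k) · Π_{a<b} r_{ab}^{k_a k_b} · Π_a r_{aa}^{C(k_a,2)} w_a^{k_a} equals the sum over all functions f : {1,...,n} → {1,...,p} of Π_{1 ≤ s < t ≤ n} r_{f(s) f(t)} · Π_{s=1}^n w_{f(s)}. -/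
open Finset

def cnt {n p : ℕ} (f : Fin n → Fin p) (a : Fin p) : ℕ :=
  (univ.filter (fun s => f s = a)).card

lemma cnt_mem {n p : ℕ} (f : Fin n → Fin p) : cnt f ∈ Finset.Nat.antidiagonalTuple p n := by
  rw [Finset.Nat.mem_antidiagonalTuple]
  have := Finset.card_eq_sum_card_fiberwise (f := f) (s := univ) (t := univ)
    (fun x _ => mem_univ _)
  simpa [cnt] using this.symm

lemma prod_comp_cnt {n p : ℕ} {M : Type*} [CommMonoid M] (f : Fin n → Fin p) (g : Fin p → M) :
    ∏ s : Fin n, g (f s) = ∏ a : Fin p, g a ^ cnt f a := by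
  rw [← Finset.prod_fiberwise_of_maps_to (g := f) (t := univ) (fun x _ => mem_univ (f x))
    (fun s => g (f s))]
  refine Finset.prod_congr rfl fun a _ => ?_
  rw [Finset.prod_congr rfl (fun s hs => by rw [(Finset.mem_filter.1 hs).2]),
    Finset.prod_const, cnt]

lemma card_fiber_lt {n p : ℕ} (f : Fin n → Fin p) {a b : Fin p} (hab : a < b) :
    ((univ.filter (fun x : Fin n × Fin n => x.1 < x.2)).filter
      (fun x => (if f x.1 ≤ f x.2 then (f x.1, f x.2) else (f x.2, f x.1)) = (a, b))).card
    = cnt f a * cnt f b := by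
  rw [cnt, cnt, ← Finset.card_product]
  apply Finset.card_bij' (fun x _ => if f x.1 = a then x else (x.2, x.1))
    (fun y _ => if y.1 < y.2 then y else (y.2, y.1))
  · intro x hx
    simp only [Finset.mem_filter, Finset.mem_univ, true_and] at hx
    obtain ⟨hlt, hcond⟩ := hx
    simp only [Finset.mem_product, Finset.mem_filter, Finset.mem_univ, true_and]
    split_ifs at hcond with h
    · have h1 : f x.1 = a := congrArg Prod.fst hcond
      have h2 : f x.2 = b := congrArg Prod.snd hcond
      rw [if_pos h1]; exact ⟨h1, h2⟩
    · have h1 : f x.2 = a := congrArg Prod.fst hcond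
      have h2 : f x.1 = b := congrArg Prod.snd hcond
      have hne : ¬ f x.1 = a := by rw [h2]; exact fun e => absurd (e ▸ hab) (lt_irrefl _)
      rw [if_neg hne]; exact ⟨h1, h2⟩
  · intro y hy
    simp only [Finset.mem_product, Finset.mem_filter, Finset.mem_univ, true_and] at hy
    obtain ⟨h1, h2⟩ := hy
    have hne : y.1 ≠ y.2 := by
      intro e; rw [e, h2] at h1; exact absurd (h1 ▸ hab) (lt_irrefl _)
    simp only [Finset.mem_filter, Finset.mem_univ, true_and]
    rcases lt_or_gt_of_ne hne with h | h
    · rw [if_pos h]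
      refine ⟨h, ?_⟩
      rw [if_pos (by rw [h1, h2]; exact hab.le)]
      rw [h1, h2]
    · rw [if_neg (not_lt_of_gt h)]
      refine ⟨h, ?_⟩
      rw [if_neg (by rw [h1, h2]; exact not_le_of_gt hab)]
      rw [h1, h2]
  · intro x hx
    simp only [Finset.mem_filter, Finset.mem_univ, true_and] at hx
    obtain ⟨hlt, hcond⟩ := hx
    by_cases h : f x.1 = a
    · rw [if_pos h, if_pos hlt]
    · rw [if_neg h, if_neg (not_lt_of_gt hlt)]
  · intro y hy
    simp only [Finset.mem_product, Finset.mem_filter, Finset.mem_univ, true_and] at hy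
    obtain ⟨h1, h2⟩ := hy
    by_cases h : y.1 < y.2
    · rw [if_pos h, if_pos h1]
    · rw [if_neg h]
      have hne : ¬ f y.2 = a := by
        rw [h2]; exact fun e => absurd (e ▸ hab) (lt_irrefl _)
      rw [if_neg hne]

lemma card_fiber_diag {n p : ℕ} (f : Fin n → Fin p) (a : Fin p) :
    ((univ.filter (fun x : Fin n × Fin n => x.1 < x.2)).filter
      (fun x => (if f x.1 ≤ f x.2 then (f x.1, f x.2) else (f x.2, f x.1)) = (a, a))).card
    = Nat.choose (cnt f a) 2 := by
  have hc : ∀ x : Fin n × Fin n,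
      ((if f x.1 ≤ f x.2 then (f x.1, f x.2) else (f x.2, f x.1)) = (a, a)) ↔
        (f x.1 = a ∧ f x.2 = a) := by
    intro x; split_ifs with h <;> simp [Prod.ext_iff, and_comm]
  rw [cnt, ← Finset.card_powersetCard]
  apply Finset.card_bij (fun x _ => ({x.1, x.2} : Finset (Fin n)))
  · intro x hx
    simp only [Finset.mem_filter, Finset.mem_univ, true_and, hc] at hx
    obtain ⟨hlt, h1, h2⟩ := hx
    rw [Finset.mem_powersetCard]
    constructor
    · intro u hu
      simp only [Finset.mem_insert, Finset.mem_singleton] at hu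
      rcases hu with rfl | rfl <;> simp [h1, h2]
    · exact Finset.card_pair hlt.ne
  · intro x hx y hy hxy
    simp only [Finset.mem_filter, Finset.mem_univ, true_and, hc] at hx hy
    have hx1 : x.1 ∈ ({y.1, y.2} : Finset (Fin n)) := by rw [← hxy]; simp
    have hx2 : x.2 ∈ ({y.1, y.2} : Finset (Fin n)) := by rw [← hxy]; simp
    simp only [Finset.mem_insert, Finset.mem_singleton] at hx1 hx2
    rcases hx1 with h1 | h1 <;> rcases hx2 with h2 | h2
    · exfalso; have := hx.1; rw [h1, h2] at this; exact absurd this (lt_irrefl _)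
    · exact Prod.ext h1 h2
    · exfalso
      have h3 : y.2 < y.1 := by rw [← h1, ← h2]; exact hx.1
      exact absurd hy.1 (asymm h3)
    · exfalso; have := hx.1; rw [h1, h2] at this; exact absurd this (lt_irrefl _)
  · intro B hB
    rw [Finset.mem_powersetCard] at hB
    obtain ⟨hsub, hcard⟩ := hB
    obtain ⟨u, v, huv, rfl⟩ := Finset.card_eq_two.mp hcard
    have hu : f u = a := (Finset.mem_filter.mp (hsub (by simp))).2
    have hv : f v = a := (Finset.mem_filter.mp (hsub (by simp))).2
    rcases lt_or_gt_of_ne huv with h | h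
    · refine ⟨(u, v), ?_, rfl⟩
      simp only [Finset.mem_filter, Finset.mem_univ, true_and, hc]
      exact ⟨h, hu, hv⟩
    · refine ⟨(v, u), ?_, ?_⟩
      · simp only [Finset.mem_filter, Finset.mem_univ, true_and, hc]
        exact ⟨h, hv, hu⟩
      · exact Finset.pair_comm v u

lemma prod_pairs {n p : ℕ} (r : Fin p → Fin p → ℝ) (hsym : ∀ a b, r a b = r b a)
    (f : Fin n → Fin p) :
    ∏ x ∈ univ.filter (fun x : Fin n × Fin n => x.1 < x.2), r (f x.1) (f x.2)
    = (∏ x ∈ univ.filter (fun x : Fin p × Fin p => x.1 < x.2),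
        r x.1 x.2 ^ (cnt f x.1 * cnt f x.2)) *
      ∏ a : Fin p, r a a ^ Nat.choose (cnt f a) 2 := by
  have hmaps : ∀ x ∈ univ.filter (fun x : Fin n × Fin n => x.1 < x.2),
      (if f x.1 ≤ f x.2 then (f x.1, f x.2) else (f x.2, f x.1)) ∈
        univ.filter (fun y : Fin p × Fin p => y.1 ≤ y.2) := by
    intro x _
    simp only [Finset.mem_filter, Finset.mem_univ, true_and]
    split_ifs with h
    · exact h
    · exact le_of_not_ge h
  rw [← Finset.prod_fiberwise_of_maps_to hmaps (fun x => r (f x.1) (f x.2))]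
  have hinner : ∀ y ∈ univ.filter (fun y : Fin p × Fin p => y.1 ≤ y.2),
      (∏ x ∈ (univ.filter (fun x : Fin n × Fin n => x.1 < x.2)).filter
        (fun x => (if f x.1 ≤ f x.2 then (f x.1, f x.2) else (f x.2, f x.1)) = y),
        r (f x.1) (f x.2))
      = r y.1 y.2 ^ ((univ.filter (fun x : Fin n × Fin n => x.1 < x.2)).filter
        (fun x => (if f x.1 ≤ f x.2 then (f x.1, f x.2) else (f x.2, f x.1)) = y)).card := by
    intro y _
    rw [← Finset.prod_const]
    refine Finset.prod_congr rfl fun x hx => ?_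
    have hcond := (Finset.mem_filter.1 hx).2
    split_ifs at hcond with h
    · rw [← hcond]
    · rw [← hcond]; exact hsym _ _
  rw [Finset.prod_congr rfl hinner,
    ← Finset.prod_filter_mul_prod_filter_not
      (univ.filter (fun y : Fin p × Fin p => y.1 ≤ y.2)) (fun y => y.1 < y.2)]
  congr 1
  · rw [Finset.filter_filter]
    have hset : (univ.filter fun y : Fin p × Fin p => y.1 ≤ y.2 ∧ y.1 < y.2)
        = univ.filter fun y : Fin p × Fin p => y.1 < y.2 := by
      refine Finset.filter_congr fun y _ => ?_
      exact ⟨fun h => h.2, fun h => ⟨h.le, h⟩⟩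
    rw [hset]
    refine Finset.prod_congr rfl fun y hy => ?_
    rw [card_fiber_lt f (Finset.mem_filter.1 hy).2]
  · have hset : ((univ.filter fun y : Fin p × Fin p => y.1 ≤ y.2).filter
        fun y => ¬ y.1 < y.2) = univ.filter (fun y : Fin p × Fin p => y.1 = y.2) := by
      rw [Finset.filter_filter]
      refine Finset.filter_congr fun y _ => ?_
      exact ⟨fun h => le_antisymm h.1 (le_of_not_gt h.2),
        fun h => ⟨h.le, by rw [h]; exact lt_irrefl _⟩⟩
    rw [hset]
    refine (Finset.prod_bij (fun (a : Fin p) _ => ((a, a) : Fin p × Fin p)) ?_ ?_ ?_ ?_).symm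
    · intro a _; simp
    · intro a _ b _ h; exact congrArg Prod.fst h
    · intro y hy
      exact ⟨y.1, mem_univ _, Prod.ext rfl (Finset.mem_filter.1 hy).2⟩
    · intro a _
      rw [card_fiber_diag f a]

lemma prod_X_pow (p : ℕ) (k : Fin p → ℕ) :
    (∏ a : Fin p, (MvPolynomial.X a : MvPolynomial (Fin p) ℚ) ^ k a)
      = MvPolynomial.monomial (Finsupp.equivFunOnFinite.symm k) (1 : ℚ) := by
  rw [← MvPolynomial.prod_X_pow_eq_monomial]
  exact (Finset.prod_subset (Finset.subset_univ _) (fun a _ ha => by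
    rw [show k a = 0 from Finsupp.notMem_support_iff.1 ha, pow_zero])).symm

lemma card_cnt {n p : ℕ} {k : Fin p → ℕ} (hk : k ∈ Finset.Nat.antidiagonalTuple p n) :
    ((univ.filter (fun f : Fin n → Fin p => cnt f = k)).card : ℚ)
      = Nat.multinomial univ k := by
  classical
  have h1 : (∑ a : Fin p, (MvPolynomial.X a : MvPolynomial (Fin p) ℚ)) ^ n
      = ∑ f : Fin n → Fin p, ∏ i : Fin n, MvPolynomial.X (f i) :=
    Fintype.sum_pow _ n
  have h2 : (∑ a : Fin p, (MvPolynomial.X a : MvPolynomial (Fin p) ℚ)) ^ n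
      = ∑ k' ∈ Finset.Nat.antidiagonalTuple p n,
          MvPolynomial.C ((Nat.multinomial univ k' : ℚ)) *
            MvPolynomial.monomial (Finsupp.equivFunOnFinite.symm k') (1 : ℚ) := by
    rw [Finset.sum_pow_eq_sum_piAntidiag univ _ n,
      Finset.piAntidiag_univ_fin_eq_antidiagonalTuple n p]
    refine Finset.sum_congr rfl fun k' _ => ?_
    rw [← prod_X_pow, MvPolynomial.C_eq_coe_nat]
  have h3 : (∑ a : Fin p, (MvPolynomial.X a : MvPolynomial (Fin p) ℚ)) ^ n
      = ∑ k' ∈ Finset.Nat.antidiagonalTuple p n,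
          MvPolynomial.C (((univ.filter (fun f : Fin n → Fin p => cnt f = k')).card : ℚ)) *
            MvPolynomial.monomial (Finsupp.equivFunOnFinite.symm k') (1 : ℚ) := by
    rw [h1, ← Finset.sum_fiberwise_of_maps_to (fun f _ => cnt_mem f)
      (fun f => ∏ i : Fin n, MvPolynomial.X (f i))]
    refine Finset.sum_congr rfl fun k' _ => ?_
    have hterm : ∀ f ∈ univ.filter (fun f : Fin n → Fin p => cnt f = k'),
        ∏ i : Fin n, MvPolynomial.X (f i)
          = MvPolynomial.monomial (Finsupp.equivFunOnFinite.symm k') (1 : ℚ) := by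
      intro f hf
      have hcf : cnt f = k' := (Finset.mem_filter.1 hf).2
      rw [prod_comp_cnt f (fun a => MvPolynomial.X a), hcf, prod_X_pow]
    rw [Finset.sum_congr rfl hterm, Finset.sum_const, nsmul_eq_mul,
      MvPolynomial.C_eq_coe_nat]
  have h4 := h2.symm.trans h3
  have h5 := congrArg (MvPolynomial.coeff (Finsupp.equivFunOnFinite.symm k)) h4
  simp only [MvPolynomial.coeff_sum, MvPolynomial.coeff_C_mul,
    MvPolynomial.coeff_monomial] at h5
  rw [Finset.sum_eq_single_of_mem k hk (fun k' _ hne => ?_),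
    Finset.sum_eq_single_of_mem k hk (fun k' _ hne => ?_)] at h5
  · simpa using h5.symm
  · rw [if_neg (fun e => hne (Finsupp.equivFunOnFinite.symm.injective e)), mul_zero]
  · rw [if_neg (fun e => hne (Finsupp.equivFunOnFinite.symm.injective e)), mul_zero]

lemma card_cnt' {n p : ℕ} {k : Fin p → ℕ} (hk : k ∈ Finset.Nat.antidiagonalTuple p n) :
    (univ.filter (fun f : Fin n → Fin p => cnt f = k)).card = Nat.multinomial univ k := by
  exact_mod_cast card_cnt hk

/-- Grouping assignments of `n` domain elements to `p` cells by their occupancy vector: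
the closed-form sum over p-vectors equals the sum over all cell assignments. -/
theorem stmt11 {p : ℕ} (r : Fin p → Fin p → ℝ) (w : Fin p → ℝ)
    (hsym : ∀ a b, r a b = r b a) (n : ℕ) (hn : 1 ≤ n) :
    ∑ k ∈ Finset.Nat.antidiagonalTuple p n,
      ((Nat.multinomial Finset.univ k : ℝ) *
        (∏ x ∈ Finset.univ.filter (fun x : Fin p × Fin p => x.1 < x.2),
          r x.1 x.2 ^ (k x.1 * k x.2)) *
        ∏ a : Fin p, r a a ^ Nat.choose (k a) 2 * w a ^ (k a)) =
    ∑ f : Fin n → Fin p,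
      (∏ x ∈ Finset.univ.filter (fun x : Fin n × Fin n => x.1 < x.2),
        r (f x.1) (f x.2)) * ∏ s : Fin n, w (f s) := by
  classical
  rw [← Finset.sum_fiberwise_of_maps_to (g := cnt) (fun f (_ : f ∈ univ) => cnt_mem f)
    (fun f => (∏ x ∈ univ.filter (fun x : Fin n × Fin n => x.1 < x.2),
      r (f x.1) (f x.2)) * ∏ s : Fin n, w (f s))]
  refine Finset.sum_congr rfl fun k hk => ?_
  have hterm : ∀ f ∈ univ.filter (fun f : Fin n → Fin p => cnt f = k),
      (∏ x ∈ univ.filter (fun x : Fin n × Fin n => x.1 < x.2),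
        r (f x.1) (f x.2)) * ∏ s : Fin n, w (f s)
      = ((∏ x ∈ univ.filter (fun x : Fin p × Fin p => x.1 < x.2),
          r x.1 x.2 ^ (k x.1 * k x.2)) *
        ∏ a : Fin p, r a a ^ Nat.choose (k a) 2) * ∏ a : Fin p, w a ^ k a := by
    intro f hf
    have hcf : cnt f = k := (Finset.mem_filter.1 hf).2
    rw [prod_pairs r hsym f, prod_comp_cnt f w, hcf]
  rw [Finset.sum_congr rfl hterm, Finset.sum_const, nsmul_eq_mul, card_cnt' hk,
    Finset.prod_mul_distrib]
  ring
end

section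
/- Let r be an arbitrary (not necessarily symmetric) p×p real matrix and w ∈ ℝ^p. Define T_i as in the incremental algorithm: T_1(δ_j) = w_j and T_{i+1}(u) = Σ_j T_i(u - δ_j) · w_j · Π_l r_{jl}^{(u-δ_j)_l}. Then Σ_{k: |k|=n} T_n(k) equals the sum over all functions f : {1,...,n} → {1,...,p} of Π_{1 ≤ s < t ≤ n} r_{f(t) f(s)} · Π_s w_{f(s)}. -/
namespace Stmt12Aux

open Finset

/-- count vector of an assignment -/
def cnt {p n : ℕ} (f : Fin n → Fin p) : Fin p → ℕ :=
  fun j => ∑ s, if f s = j then 1 else 0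

/-- weight of an assignment -/
noncomputable def P {p n : ℕ} (r : Fin p → Fin p → ℝ) (w : Fin p → ℝ)
    (f : Fin n → Fin p) : ℝ :=
  (∏ x ∈ Finset.univ.filter (fun x : Fin n × Fin n => x.1 < x.2), r (f x.2) (f x.1)) *
    ∏ s, w (f s)

lemma sum_cnt {p n : ℕ} (f : Fin n → Fin p) : ∑ j, cnt f j = n := by
  unfold cnt
  rw [Finset.sum_comm]
  simp [Finset.sum_ite_eq]

lemma cnt_snoc {p n : ℕ} (f : Fin n → Fin p) (j : Fin p) :
    cnt (Fin.snoc f j) = cnt f + Pi.single j 1 := by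
  funext l
  simp only [cnt, Fin.sum_univ_castSucc, Fin.snoc_castSucc, Fin.snoc_last, Pi.add_apply]
  congr 1
  simp [Pi.single_apply, eq_comm]

lemma prod_apply_eq {p n : ℕ} (r : Fin p → Fin p → ℝ) (f : Fin n → Fin p) (j : Fin p) :
    ∏ s, r j (f s) = ∏ l, (r j l) ^ (cnt f l) := by
  have h1 : ∀ s, r j (f s) = ∏ l, (r j l) ^ (if f s = l then 1 else 0) := by
    intro s
    simp [apply_ite (fun e => (r j _ : ℝ) ^ e)]
  calc ∏ s, r j (f s) = ∏ s, ∏ l, (r j l) ^ (if f s = l then 1 else 0) := by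
        exact Finset.prod_congr rfl fun s _ => h1 s
    _ = ∏ l, ∏ s, (r j l) ^ (if f s = l then 1 else 0) := Finset.prod_comm
    _ = ∏ l, (r j l) ^ (cnt f l) := by
        exact Finset.prod_congr rfl fun l _ =>
          Finset.prod_pow_eq_pow_sum _ _ _

lemma Iio_last_eq {m : ℕ} :
    Finset.Iio (Fin.last m) = Finset.univ.map Fin.castSuccEmb := by
  ext x
  simp [Fin.lt_last_iff_ne_last, ← Fin.exists_castSucc_eq, eq_comm, Fin.castSuccEmb]

lemma prod_pairs {m : ℕ} (F : Fin m → Fin m → ℝ) :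
    (∏ x ∈ Finset.univ.filter (fun x : Fin m × Fin m => x.1 < x.2), F x.1 x.2) =
    ∏ t, ∏ s ∈ Finset.Iio t, F s t := by
  rw [Finset.prod_filter, ← Finset.univ_product_univ, Finset.prod_product_right]
  refine Finset.prod_congr rfl fun t _ => ?_
  rw [← Finset.prod_filter]
  congr 1
  ext x; simp

lemma P_snoc {p n : ℕ} (r : Fin p → Fin p → ℝ) (w : Fin p → ℝ)
    (f : Fin n → Fin p) (j : Fin p) :
    P r w (Fin.snoc f j) = P r w f * w j * ∏ s, r j (f s) := by
  unfold P
  rw [prod_pairs (fun s t => r ((Fin.snoc f j : Fin (n+1) → Fin p) t)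
    ((Fin.snoc f j : Fin (n+1) → Fin p) s)), prod_pairs (fun s t => r (f t) (f s))]
  have hw : (∏ s : Fin (n+1), w ((Fin.snoc f j : Fin (n+1) → Fin p) s))
      = (∏ s : Fin n, w (f s)) * w j := by
    rw [Fin.prod_univ_castSucc]
    simp
  have hT : (∏ t : Fin (n+1), ∏ s ∈ Finset.Iio t,
        r ((Fin.snoc f j : Fin (n+1) → Fin p) t) ((Fin.snoc f j : Fin (n+1) → Fin p) s))
      = (∏ t : Fin n, ∏ s ∈ Finset.Iio t, r (f t) (f s)) * ∏ s, r j (f s) := by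
    rw [Fin.prod_univ_castSucc]
    congr 1
    · refine Finset.prod_congr rfl fun t _ => ?_
      rw [Fin.Iio_castSucc, Finset.prod_map]
      refine Finset.prod_congr rfl fun s _ => ?_
      show r ((Fin.snoc f j : Fin (n+1) → Fin p) (Fin.castSucc t))
        ((Fin.snoc f j : Fin (n+1) → Fin p) (Fin.castSucc s)) = r (f t) (f s)
      rw [Fin.snoc_castSucc, Fin.snoc_castSucc]
    · rw [Iio_last_eq, Finset.prod_map]
      refine Finset.prod_congr rfl fun s _ => ?_
      show r ((Fin.snoc f j : Fin (n+1) → Fin p) (Fin.last n))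
        ((Fin.snoc f j : Fin (n+1) → Fin p) (Fin.castSucc s)) = r j (f s)
      rw [Fin.snoc_castSucc, Fin.snoc_last]
  rw [hT, hw]
  ring

lemma T_eq {p : ℕ} (r : Fin p → Fin p → ℝ) (w : Fin p → ℝ) :
    ∀ n, ∀ k : Fin p → ℕ,
      T r w (n + 1) k = ∑ f : Fin (n + 1) → Fin p, if cnt f = k then P r w f else 0 := by
  intro n
  induction n with
  | zero =>
    intro k
    rw [show T r w 1 k = ∑ j : Fin p, if k = Pi.single j 1 then w j else 0 from rfl]
    rw [← Equiv.sum_comp (Equiv.funUnique (Fin 1) (Fin p)).symm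
      (fun f : Fin 1 → Fin p => if cnt f = k then P r w f else 0)]
    refine Finset.sum_congr rfl fun j _ => ?_
    have hc : cnt ((Equiv.funUnique (Fin 1) (Fin p)).symm j) = Pi.single j 1 := by
      funext l
      by_cases h : j = l <;>
        simp [cnt, Equiv.funUnique, Pi.single_apply, h, eq_comm]
    have hP : P r w ((Equiv.funUnique (Fin 1) (Fin p)).symm j) = w j := by
      have he : (Finset.univ.filter (fun x : Fin 1 × Fin 1 => x.1 < x.2)) = ∅ := by
        decide
      simp [P, he, Equiv.funUnique]
    rw [hc, hP]
    simp [eq_comm]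
  | succ n ih =>
    intro k
    rw [show T r w (n + 1 + 1) k = ∑ j : Fin p,
        if 1 ≤ k j then
          T r w (n + 1) (k - Pi.single j 1) * w j *
            ∏ l : Fin p, (r j l) ^ ((k - Pi.single j 1 : Fin p → ℕ) l)
        else 0 from rfl]
    rw [← Equiv.sum_comp (Fin.snocEquiv (fun _ : Fin (n + 2) => Fin p))
      (fun f : Fin (n + 2) → Fin p => if cnt f = k then P r w f else 0)]
    rw [Fintype.sum_prod_type]
    refine Finset.sum_congr rfl fun j _ => ?_
    have hsnoc : ∀ f : Fin (n + 1) → Fin p,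
        (Fin.snocEquiv (fun _ : Fin (n + 2) => Fin p)) (j, f) = Fin.snoc f j := by
      intro f; funext i; rfl
    by_cases hk : 1 ≤ k j
    · rw [if_pos hk, ih]
      have hkeq : (k - Pi.single j 1) + Pi.single j 1 = k := by
        funext l
        by_cases h : l = j
        · subst h
          simp [Nat.sub_add_cancel hk]
        · simp [Pi.single_apply, h]
      rw [Finset.sum_mul, Finset.sum_mul]
      refine Finset.sum_congr rfl fun f _ => ?_
      rw [hsnoc, cnt_snoc, P_snoc]
      by_cases hc : cnt f = k - Pi.single j 1
      · rw [if_pos hc, if_pos (by rw [hc, hkeq])]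
        rw [prod_apply_eq, hc]
      · rw [if_neg hc, if_neg (by
          intro h
          apply hc
          have := congrArg (fun u => u - Pi.single j 1) h
          simpa using this)]
        simp
    · rw [if_neg hk]
      rw [Finset.sum_eq_zero]
      intro f _
      rw [hsnoc, cnt_snoc, if_neg, ]
      intro h
      apply hk
      have := congrFun h j
      simp only [Pi.add_apply, Pi.single_eq_same] at this
      omega

end Stmt12Aux

/-- Correctness of IncrementalWFOMC with a fixed linear order on the domain: for an arbitrary
(not necessarily symmetric) matrix `r`, the total table weight equals the sum over all cell
assignments `f`, where the ordered pair `s < t` contributes `r (f t) (f s)`. -/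
theorem stmt12 {p : ℕ} (r : Fin p → Fin p → ℝ) (w : Fin p → ℝ) (n : ℕ) (hn : 1 ≤ n) :
    ∑ k ∈ Finset.Nat.antidiagonalTuple p n, T r w n k =
    ∑ f : Fin n → Fin p,
      (∏ x ∈ Finset.univ.filter (fun x : Fin n × Fin n => x.1 < x.2),
        r (f x.2) (f x.1)) * ∏ s : Fin n, w (f s) := by
  obtain ⟨m, rfl⟩ : ∃ m, n = m + 1 := ⟨n - 1, (Nat.succ_pred_eq_of_pos hn).symm⟩
  calc ∑ k ∈ Finset.Nat.antidiagonalTuple p (m + 1), T r w (m + 1) k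
      = ∑ k ∈ Finset.Nat.antidiagonalTuple p (m + 1), ∑ f : Fin (m + 1) → Fin p,
          if Stmt12Aux.cnt f = k then Stmt12Aux.P r w f else 0 := by
        exact Finset.sum_congr rfl fun k _ => Stmt12Aux.T_eq r w m k
    _ = ∑ f : Fin (m + 1) → Fin p, ∑ k ∈ Finset.Nat.antidiagonalTuple p (m + 1),
          if Stmt12Aux.cnt f = k then Stmt12Aux.P r w f else 0 := Finset.sum_comm
    _ = ∑ f : Fin (m + 1) → Fin p, Stmt12Aux.P r w f := by
        refine Finset.sum_congr rfl fun f _ => ?_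
        rw [Finset.sum_ite_eq]
        rw [if_pos]
        rw [Finset.Nat.mem_antidiagonalTuple]
        exact Stmt12Aux.sum_cnt f
    _ = _ := rfl
end

section
/- Let n ≥ 2. The number of pairs of relations (Perm, Pred) on an n-element set D, such that Perm is a fixed-point-free permutation of D, Pred ⊆ Perm, |Pred| = n - 1, and there exists a linear order ≤ on D with Pred(x, y) → x ≤ y, with the linear order counted as part of the structure (i.e., counting triples (≤, Perm, Pred)), is exactly n!. -/
lemma stmt18_exists_rank {α : Type*} [Fintype α] {m : ℕ} (hm : Fintype.card α = m)
    (r : α → α → Prop) (h : IsLinearOrder α r) :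
    ∃ e : α ≃ Fin m, ∀ x y, r x y ↔ e x ≤ e y := by
  classical
  haveI := h
  letI inst : LinearOrder α :=
    { le := r
      lt := fun a b => r a b ∧ ¬ r b a
      le_refl := fun a => refl_of r a
      le_trans := fun a b c hab hbc => trans_of r hab hbc
      le_antisymm := fun a b hab hba => antisymm_of r hab hba
      le_total := fun a b => total_of r a b
      lt_iff_le_not_ge := fun _ _ => Iff.rfl
      toDecidableLE := fun a b => Classical.dec _ }
  let f := (monoEquivOfFin α hm).symm
  exact ⟨f.toEquiv, fun x y => (f.le_iff_le (x := x) (y := y)).symm⟩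

lemma stmt18_finRotate_ne {n : ℕ} (hn : 2 ≤ n) (i : Fin n) : finRotate n i ≠ i := by
  obtain ⟨m, rfl⟩ : ∃ m, n = m + 1 := ⟨n - 1, by omega⟩
  intro h
  have h2 := coe_finRotate i
  rw [h] at h2
  split_ifs at h2 with h'
  · have : (i : ℕ) = m := by rw [h']; rfl
    omega
  · omega

lemma stmt18_coe_finRotate' {n : ℕ} (i : Fin n) (h : (i : ℕ) + 1 < n) :
    (finRotate n i : ℕ) = (i : ℕ) + 1 := by
  obtain ⟨m, rfl⟩ : ∃ m, n = m + 1 := ⟨n - 1, by omega⟩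
  exact coe_finRotate_of_ne_last (by rw [Ne, Fin.ext_iff]; simp [Fin.last]; omega)


lemma stmt18_core (n : ℕ) (hn : 2 ≤ n) (σ : Equiv.Perm (Fin n)) (Q : Fin n → Fin n → Prop)
    (h1 : ∀ x, σ x ≠ x) (h2 : ∀ x y, Q x y → y = σ x)
    (h3 : Nat.card {q : Fin n × Fin n // Q q.1 q.2} = n - 1)
    (h4 : ∀ x y, Q x y → x ≤ y) :
    σ = finRotate n ∧ ∀ x y, Q x y ↔ (y : ℕ) = (x : ℕ) + 1 := by
  classical
  set M : Fin n := ⟨n - 1, by omega⟩ with hM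
  have hne : ∀ x : Fin n, x ≠ M ↔ (x : ℕ) < n - 1 := by
    intro x
    have := x.2
    rw [Ne, Fin.ext_iff]
    simp only [hM]
    omega
  have hlt : ∀ x y, Q x y → x < y := by
    intro x y hq
    refine lt_of_le_of_ne (h4 x y hq) fun hxy => h1 x ?_
    rw [← h2 x y hq]
    exact hxy.symm
  -- the set of elements with a successor has n-1 elements
  have eB : {q : Fin n × Fin n // Q q.1 q.2} ≃ {x : Fin n // ∃ y, Q x y} :=
    { toFun := fun q => ⟨q.1.1, q.1.2, q.2⟩
      invFun := fun x => ⟨(x.1, σ x.1), by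
        obtain ⟨y, hy⟩ := x.2
        exact (h2 _ _ hy) ▸ hy⟩
      left_inv := fun q => by
        apply Subtype.ext
        exact Prod.ext rfl (h2 _ _ q.2).symm
      right_inv := fun x => rfl }
  have hS : (Finset.univ.filter (fun x : Fin n => ∃ y, Q x y)).card = n - 1 := by
    rw [← h3, Nat.card_congr eB, Nat.card_eq_fintype_card, Fintype.card_subtype]
  have hMnot : ¬ ∃ y, Q M y := by
    rintro ⟨y, hy⟩
    have h5 := hlt M y hy
    have h6 := y.2
    rw [Fin.lt_def] at h5
    simp only [hM] at h5
    omega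
  have hall : ∀ x : Fin n, x ≠ M → ∃ y, Q x y := by
    by_contra hc
    push_neg at hc
    obtain ⟨x₀, hx₀M, hx₀⟩ := hc
    have hsplit := Finset.card_filter_add_card_filter_not
      (s := (Finset.univ : Finset (Fin n))) (p := fun x : Fin n => ∃ y, Q x y)
    rw [hS, Finset.card_univ, Fintype.card_fin] at hsplit
    have hone : (Finset.univ.filter (fun x : Fin n => ¬ ∃ y, Q x y)).card = 1 := by omega
    have hMmem : M ∈ Finset.univ.filter (fun x : Fin n => ¬ ∃ y, Q x y) := by
      simp only [Finset.mem_filter, Finset.mem_univ, true_and]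
      exact hMnot
    have hx₀mem : x₀ ∈ Finset.univ.filter (fun x : Fin n => ¬ ∃ y, Q x y) := by
      simp [hx₀]
    have : 1 < (Finset.univ.filter (fun x : Fin n => ¬ ∃ y, Q x y)).card :=
      Finset.one_lt_card.mpr ⟨x₀, hx₀mem, M, hMmem, hx₀M⟩
    omega
  have hQσ : ∀ x : Fin n, x ≠ M → Q x (σ x) := by
    intro x hx
    obtain ⟨y, hy⟩ := hall x hx
    exact (h2 _ _ hy) ▸ hy
  have hstrict : ∀ x : Fin n, x ≠ M → x < σ x := fun x hx => hlt x (σ x) (hQσ x hx)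
  -- successor values
  have hsuccaux : ∀ d : ℕ, ∀ x : Fin n, (x : ℕ) + d = n - 1 → 0 < d → (σ x : ℕ) = (x : ℕ) + 1 := by
    intro d
    induction d using Nat.strong_induction_on with
    | _ d IH =>
      intro x hx hd
      have hxM : x ≠ M := (hne x).2 (by omega)
      have h5 := hstrict x hxM
      rw [Fin.lt_def] at h5
      by_contra hc
      have hσlt : (σ x : ℕ) < n := (σ x).2
      set b : Fin n := ⟨(σ x : ℕ) - 1, by omega⟩ with hb
      have hbval : (b : ℕ) = (σ x : ℕ) - 1 := rfl
      have hby : (σ b : ℕ) = (b : ℕ) + 1 := by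
        refine IH (n - 1 - (b : ℕ)) (by omega) b (by omega) (by omega)
      have hbx : σ b = σ x := by
        apply Fin.ext
        rw [hby, hbval]
        omega
      have := σ.injective hbx
      rw [Fin.ext_iff, hbval] at this
      omega
  have hsucc : ∀ x : Fin n, (x : ℕ) < n - 1 → (σ x : ℕ) = (x : ℕ) + 1 := fun x hx =>
    hsuccaux (n - 1 - (x : ℕ)) x (by omega) (by omega)
  have hσM : (σ M : ℕ) = 0 := by
    by_contra hc
    have h0 : 0 < (σ M : ℕ) := Nat.pos_of_ne_zero hc
    have hMM : σ M ≠ M := h1 M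
    have hσMlt : (σ M : ℕ) < n - 1 ∨ (σ M : ℕ) = n - 1 := by
      have := (σ M).2; omega
    have hσMle : (σ M : ℕ) ≤ n - 1 := by have := (σ M).2; omega
    have hσMne : (σ M : ℕ) ≠ n - 1 := by
      intro h
      exact hMM (Fin.ext h)
    set b : Fin n := ⟨(σ M : ℕ) - 1, by omega⟩ with hb
    have hbval : (b : ℕ) = (σ M : ℕ) - 1 := rfl
    have hby : (σ b : ℕ) = (b : ℕ) + 1 := hsucc b (by rw [hbval]; omega)
    have hbM : σ b = σ M := by
      apply Fin.ext
      rw [hby, hbval]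
      omega
    have := σ.injective hbM
    rw [Fin.ext_iff, hbval] at this
    simp only [hM] at this
    omega
  have hσeq : σ = finRotate n := by
    apply Equiv.ext
    intro x
    by_cases hx : x = M
    · subst hx
      apply Fin.ext
      rw [hσM]
      obtain ⟨m, rfl⟩ : ∃ m, n = m + 1 := ⟨n - 1, by omega⟩
      have hMl : M = Fin.last m := by apply Fin.ext; simp [hM, Fin.last]
      rw [hMl, coe_finRotate, if_pos rfl]
    · apply Fin.ext
      rw [hsucc x ((hne x).1 hx), stmt18_coe_finRotate' x (by have := (hne x).1 hx; omega)]
  refine ⟨hσeq, fun x y => ⟨fun hq => ?_, fun hy => ?_⟩⟩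
  · have hxM : x ≠ M := fun h => hMnot ⟨y, h ▸ hq⟩
    rw [h2 x y hq, hsucc x ((hne x).1 hxM)]
  · have hxlt : (x : ℕ) < n - 1 := by have := y.2; omega
    have hxM : x ≠ M := (hne x).2 hxlt
    have hQ := hQσ x hxM
    have : σ x = y := Fin.ext (by rw [hsucc x hxlt, hy])
    exact this ▸ hQ
def stmt18_F (n : ℕ) (π : Equiv.Perm (Fin n)) :
    (Fin n → Fin n → Prop) × Equiv.Perm (Fin n) × (Fin n → Fin n → Prop) :=
  ⟨fun x y => π x ≤ π y, (π.trans (finRotate n)).trans π.symm,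
   fun x y => (π y : ℕ) = (π x : ℕ) + 1⟩

lemma stmt18_F_mem (n : ℕ) (hn : 2 ≤ n) (π : Equiv.Perm (Fin n)) :
    IsLinearOrder (Fin n) (stmt18_F n π).1 ∧
    (∀ x, (stmt18_F n π).2.1 x ≠ x) ∧
    (∀ x y, (stmt18_F n π).2.2 x y → y = (stmt18_F n π).2.1 x) ∧
    Nat.card {q : Fin n × Fin n // (stmt18_F n π).2.2 q.1 q.2} = n - 1 ∧
    (∀ x y, (stmt18_F n π).2.2 x y → (stmt18_F n π).1 x y) := by
  classical
  refine ⟨?_, ?_, ?_, ?_, ?_⟩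
  · exact
      { refl := fun a => le_refl _
        trans := fun a b c hab hbc => le_trans hab hbc
        antisymm := fun a b hab hba => π.injective (le_antisymm hab hba)
        total := fun a b => le_total _ _ }
  · intro x h
    simp only [stmt18_F, Equiv.trans_apply] at h
    have : finRotate n (π x) = π x := by
      have := congrArg π h
      simpa using this
    exact stmt18_finRotate_ne hn (π x) this
  · intro x y h
    simp only [stmt18_F, Equiv.trans_apply] at h ⊢
    have h2 : (π y : ℕ) < n := (π y).2
    have h3 : (finRotate n (π x) : ℕ) = (π x : ℕ) + 1 :=
      stmt18_coe_finRotate' (π x) (by omega)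
    have : finRotate n (π x) = π y := Fin.ext (by rw [h3, h])
    rw [this, π.symm_apply_apply]
  · have e4 : {q : Fin n × Fin n // (stmt18_F n π).2.2 q.1 q.2} ≃ Fin (n - 1) :=
      { toFun := fun q => ⟨(π q.1.1 : ℕ), by
          have h1 := (π q.1.2).2
          have h2 := q.2
          simp only [stmt18_F] at h2
          omega⟩
        invFun := fun k => ⟨(π.symm ⟨(k : ℕ), by omega⟩, π.symm ⟨(k : ℕ) + 1, by
            have := k.2; omega⟩), by
          simp only [stmt18_F, Equiv.apply_symm_apply]⟩
        left_inv := fun q => by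
          apply Subtype.ext
          have h2 : (π q.1.2 : ℕ) = (π q.1.1 : ℕ) + 1 := q.2
          apply Prod.ext
          · simp only
            rw [show (⟨(π q.1.1 : ℕ), _⟩ : Fin n) = π q.1.1 from Fin.ext rfl]
            exact π.symm_apply_apply _
          · simp only
            rw [show (⟨(π q.1.1 : ℕ) + 1, _⟩ : Fin n) = π q.1.2 from Fin.ext h2.symm]
            exact π.symm_apply_apply _
        right_inv := fun k => by
          apply Fin.ext
          simp only [Equiv.apply_symm_apply] }
    rw [Nat.card_congr e4, Nat.card_eq_fintype_card, Fintype.card_fin]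
  · intro x y h
    simp only [stmt18_F] at h ⊢
    rw [Fin.le_def]
    omega

lemma stmt18_F_inj (n : ℕ) : Function.Injective (stmt18_F n) := by
  intro π₁ π₂ h
  have h1 : ∀ x y : Fin n, (π₁ x ≤ π₁ y) ↔ (π₂ x ≤ π₂ y) := by
    intro x y
    exact iff_of_eq (congrFun (congrFun (congrArg Prod.fst h) x) y)
  let g : Fin n ≃o Fin n :=
    { toEquiv := π₁.symm.trans π₂
      map_rel_iff' := @fun a b => by
        simp only [Equiv.trans_apply]
        rw [← h1]
        simp }
  have hg : g = OrderIso.refl (Fin n) := Subsingleton.elim _ _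
  apply Equiv.ext
  intro x
  have h2 : g (π₁ x) = π₁ x := by rw [hg]; rfl
  have h3 : g (π₁ x) = π₂ x := by
    show π₂ (π₁.symm (π₁ x)) = π₂ x
    rw [π₁.symm_apply_apply]
  rw [← h3, h2]
lemma stmt18_F_surj (n : ℕ) (hn : 2 ≤ n)
    (t : (Fin n → Fin n → Prop) × Equiv.Perm (Fin n) × (Fin n → Fin n → Prop))
    (ht : IsLinearOrder (Fin n) t.1 ∧ (∀ x, t.2.1 x ≠ x) ∧
      (∀ x y, t.2.2 x y → y = t.2.1 x) ∧
      Nat.card {q : Fin n × Fin n // t.2.2 q.1 q.2} = n - 1 ∧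
      (∀ x y, t.2.2 x y → t.1 x y)) :
    ∃ π : Equiv.Perm (Fin n), stmt18_F n π = t := by
  obtain ⟨r, σ, P⟩ := t
  obtain ⟨hlin, hfp, hsub, hcard, hcomp⟩ := ht
  simp only at hlin hfp hsub hcard hcomp
  obtain ⟨e, he⟩ := stmt18_exists_rank (Fintype.card_fin n) r hlin
  set τ : Equiv.Perm (Fin n) := (e.symm.trans σ).trans e with hτdef
  set Q : Fin n → Fin n → Prop := fun a b => P (e.symm a) (e.symm b) with hQdef
  have c1 : ∀ a, τ a ≠ a := by
    intro a h
    simp only [hτdef, Equiv.trans_apply] at h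
    exact hfp (e.symm a) (by
      have := congrArg e.symm h
      simpa using this)
  have c2 : ∀ a b, Q a b → b = τ a := by
    intro a b hq
    have := hsub _ _ hq
    have h2 := congrArg e this
    simpa [hτdef] using h2
  have c3 : Nat.card {q : Fin n × Fin n // Q q.1 q.2} = n - 1 := by
    rw [← hcard]
    refine Nat.card_congr ?_
    exact
      { toFun := fun q => ⟨(e.symm q.1.1, e.symm q.1.2), q.2⟩
        invFun := fun q => ⟨(e q.1.1, e q.1.2), by
          show P (e.symm (e q.1.1)) (e.symm (e q.1.2))
          simpa using q.2⟩
        left_inv := fun q => by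
          apply Subtype.ext
          exact Prod.ext (by simp) (by simp)
        right_inv := fun q => by
          apply Subtype.ext
          exact Prod.ext (by simp) (by simp) }
  have c4 : ∀ a b, Q a b → a ≤ b := by
    intro a b hq
    have := (he _ _).1 (hcomp _ _ hq)
    simpa using this
  obtain ⟨hτ, hQ⟩ := stmt18_core n hn τ Q c1 c2 c3 c4
  refine ⟨e, ?_⟩
  refine Prod.ext ?_ (Prod.ext ?_ ?_)
  · funext x y
    exact propext (he x y).symm
  · apply Equiv.ext
    intro x
    show e.symm (finRotate n (e x)) = σ x
    rw [← hτ]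
    simp [hτdef]
  · funext x y
    show ((e y : ℕ) = (e x : ℕ) + 1) = P x y
    rw [← hQ (e x) (e y)]
    show ((fun a b => P (e.symm a) (e.symm b)) (e x) (e y)) = P x y
    simp



/-- The predecessor theory has exactly `n!` models: the number of triples `(≤, Perm, Pred)`
on an `n`-element set (`n ≥ 2`), where `≤` is a linear order, `Perm` is a fixed-point-free
permutation, `Pred` is a sub-relation of the graph of `Perm` with exactly `n - 1` pairs, all
compatible with `≤`, is exactly `n!`. -/
theorem stmt18 (n : ℕ) (hn : 2 ≤ n) :
    Nat.card {t : (Fin n → Fin n → Prop) × Equiv.Perm (Fin n) × (Fin n → Fin n → Prop) //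
      IsLinearOrder (Fin n) t.1 ∧
      (∀ x, t.2.1 x ≠ x) ∧
      (∀ x y, t.2.2 x y → y = t.2.1 x) ∧
      Nat.card {q : Fin n × Fin n // t.2.2 q.1 q.2} = n - 1 ∧
      (∀ x y, t.2.2 x y → t.1 x y)} = Nat.factorial n := by
  have hbij : Function.Bijective
      (fun π : Equiv.Perm (Fin n) =>
        (⟨stmt18_F n π, stmt18_F_mem n hn π⟩ :
          {t : (Fin n → Fin n → Prop) × Equiv.Perm (Fin n) × (Fin n → Fin n → Prop) //
            IsLinearOrder (Fin n) t.1 ∧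
            (∀ x, t.2.1 x ≠ x) ∧
            (∀ x y, t.2.2 x y → y = t.2.1 x) ∧
            Nat.card {q : Fin n × Fin n // t.2.2 q.1 q.2} = n - 1 ∧
            (∀ x y, t.2.2 x y → t.1 x y)})) := by
    constructor
    · intro a b h
      exact stmt18_F_inj n (congrArg Subtype.val h)
    · rintro ⟨t, ht⟩
      obtain ⟨π, hπ⟩ := stmt18_F_surj n hn t ht
      exact ⟨π, Subtype.ext hπ⟩
  rw [← Nat.card_eq_of_bijective _ hbij, Nat.card_eq_fintype_card, Fintype.card_perm,
    Fintype.card_fin]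
end

section
/- Let n ≥ 4. The number of triples (≤, σ, c) where ≤ is a linear order on an n-element set D, c : D → {Red, Blue} is a proper 2-coloring of consecutive elements of ≤ (consecutive elements get different colors), and σ is a fixed-point-free permutation of D that preserves the coloring (c(σ(x)) = c(x)), has exactly two x with σ(x) < x under ≤, and admits a sub-relation of size n-2 contained in {(x, σ(x)) : x < σ(x)}, is exactly 2 · n!. -/
open Equiv
namespace Stmt19Aux

def shift2 (n : ℕ) (i : Fin n) : Fin n :=
  if h : (i : ℕ) + 2 < n then ⟨(i : ℕ) + 2, h⟩
  else ⟨(i : ℕ) % 2, lt_of_le_of_lt (Nat.mod_le _ _) i.isLt⟩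

lemma shift2_val_of_lt {n : ℕ} {i : Fin n} (h : (i : ℕ) + 2 < n) :
    (shift2 n i : ℕ) = (i : ℕ) + 2 := by simp [shift2, h]
lemma shift2_val_of_ge {n : ℕ} {i : Fin n} (h : ¬ (i : ℕ) + 2 < n) :
    (shift2 n i : ℕ) = (i : ℕ) % 2 := by simp [shift2, h]
lemma shift2_parity {n : ℕ} (i : Fin n) : (shift2 n i : ℕ) % 2 = (i : ℕ) % 2 := by
  by_cases h : (i : ℕ) + 2 < n
  · rw [shift2_val_of_lt h]; omega
  · rw [shift2_val_of_ge h]; omega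
lemma shift2_ne {n : ℕ} (hn : 4 ≤ n) (i : Fin n) : shift2 n i ≠ i := by
  by_cases h : (i : ℕ) + 2 < n <;> intro he <;> have := congrArg Fin.val he
  · rw [shift2_val_of_lt h] at this; omega
  · rw [shift2_val_of_ge h] at this; omega
lemma shift2_injective {n : ℕ} : Function.Injective (shift2 n) := by
  intro a b hab
  have h := congrArg Fin.val hab
  by_cases ha : (a : ℕ) + 2 < n <;> by_cases hb : (b : ℕ) + 2 < n
  · rw [shift2_val_of_lt ha, shift2_val_of_lt hb] at h; exact Fin.ext (by omega)
  · rw [shift2_val_of_lt ha, shift2_val_of_ge hb] at h; omega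
  · rw [shift2_val_of_ge ha, shift2_val_of_lt hb] at h; omega
  · rw [shift2_val_of_ge ha, shift2_val_of_ge hb] at h
    have ha' := a.isLt; have hb' := b.isLt
    exact Fin.ext (by omega)

noncomputable def perm2 (n : ℕ) : Equiv.Perm (Fin n) :=
  Equiv.ofBijective (shift2 n) (Finite.injective_iff_bijective.mp shift2_injective)

lemma perm2_apply {n : ℕ} (i : Fin n) : perm2 n i = shift2 n i := rfl

lemma shift2_lt_iff {n : ℕ} (hn : 4 ≤ n) (i : Fin n) :
    shift2 n i < i ↔ ¬ ((i : ℕ) + 2 < n) := by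
  constructor
  · intro h hlt
    rw [Fin.lt_def, shift2_val_of_lt hlt] at h; omega
  · intro h
    rw [Fin.lt_def, shift2_val_of_ge h]
    have := i.isLt; omega

def ordOf {n : ℕ} (π : Perm (Fin n)) : Fin n → Fin n → Prop :=
  fun x y => π.symm x ≤ π.symm y

noncomputable def sigOf {n : ℕ} (π : Perm (Fin n)) : Perm (Fin n) :=
  (π.symm.trans (perm2 n)).trans π

lemma sigOf_apply {n : ℕ} (π : Perm (Fin n)) (x : Fin n) :
    sigOf π x = π (shift2 n (π.symm x)) := rfl

def colOf {n : ℕ} (π : Perm (Fin n)) (b : Bool) : Fin n → Bool :=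
  fun x => xor b (decide ((π.symm x : ℕ) % 2 = 1))

noncomputable def F {n : ℕ} (p : Perm (Fin n) × Bool) :
    (Fin n → Fin n → Prop) × Equiv.Perm (Fin n) × (Fin n → Bool) :=
  (ordOf p.1, sigOf p.1, colOf p.1 p.2)

def Pred19 {n : ℕ} (t : (Fin n → Fin n → Prop) × Equiv.Perm (Fin n) × (Fin n → Bool)) : Prop :=
  IsLinearOrder (Fin n) t.1 ∧
  (∀ x y : Fin n,
    ((t.1 x y ∧ x ≠ y) ∧ ∀ z, ¬ ((t.1 x z ∧ x ≠ z) ∧ (t.1 z y ∧ z ≠ y))) →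
    t.2.2 x ≠ t.2.2 y) ∧
  (∀ x, t.2.1 x ≠ x) ∧
  (∀ x, t.2.2 (t.2.1 x) = t.2.2 x) ∧
  Nat.card {x : Fin n // t.1 (t.2.1 x) x ∧ t.2.1 x ≠ x} = 2 ∧
  n - 2 ≤ Nat.card {x : Fin n // t.1 x (t.2.1 x) ∧ x ≠ t.2.1 x}

lemma F_mem {n : ℕ} (hn : 4 ≤ n) (π : Perm (Fin n)) (b : Bool) : Pred19 (F (π, b)) := by
  simp only [Pred19, F]
  have h2 : (2:ℕ) ≤ n := by omega
  set a1 : Fin n := ⟨n - 2, by omega⟩ with ha1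
  set b1 : Fin n := ⟨n - 1, by omega⟩ with hb1
  have hav : (a1 : ℕ) = n - 2 := rfl
  have hbv : (b1 : ℕ) = n - 1 := rfl
  have hab : a1 ≠ b1 := by
    intro h; have := congrArg Fin.val h; omega
  have hwrap : ∀ i : Fin n, ¬ ((i:ℕ) + 2 < n) ↔ (i = a1 ∨ i = b1) := by
    intro i
    constructor
    · intro h
      have := i.isLt
      rcases Nat.lt_or_ge (i : ℕ) (n-1) with h' | h'
      · left; exact Fin.ext (by omega)
      · right; exact Fin.ext (by omega)
    · rintro (rfl | rfl) <;> omega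
  refine ⟨?_, ?_, ?_, ?_, ?_, ?_⟩
  · -- linear order
    exact { refl := fun x => le_refl _
            trans := fun x y z h1 h2 => le_trans h1 h2
            antisymm := fun x y h1 h2 => π.symm.injective (le_antisymm h1 h2)
            total := fun x y => le_total _ _ }
  · -- consecutive colors
    intro x y ⟨⟨hxy, hne⟩, hbet⟩
    set i := π.symm x with hi
    set j := π.symm y with hj
    have hx : π i = x := π.apply_symm_apply x
    have hy : π j = y := π.apply_symm_apply y
    have hij : i ≤ j := hxy
    have hij' : i ≠ j := fun h => hne (by rw [← hx, ← hy, h])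
    have hlt : (i:ℕ) < (j:ℕ) := lt_of_le_of_ne hij (by simpa [Fin.ext_iff] using hij')
    have hsucc : (j : ℕ) = (i : ℕ) + 1 := by
      by_contra hc
      have h1 : (i:ℕ) + 1 < (j:ℕ) := by omega
      have h1n : (i:ℕ) + 1 < n := lt_trans h1 j.isLt
      set m : Fin n := ⟨(i:ℕ) + 1, h1n⟩ with hm
      have him : i ≠ m := by
        intro h; have := congrArg Fin.val h; simp [hm] at this
      have hjm : m ≠ j := by
        intro h; have := congrArg Fin.val h; simp [hm] at this; omega
      refine hbet (π m) ⟨⟨?_, ?_⟩, ?_, ?_⟩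
      · show π.symm x ≤ π.symm (π m)
        rw [Equiv.symm_apply_apply, ← hi]
        exact le_of_lt (show i < m from by simp [hm, Fin.lt_def])
      · intro h
        exact him (π.injective (by rw [hx, h]))
      · show π.symm (π m) ≤ π.symm y
        rw [Equiv.symm_apply_apply, ← hj]
        exact le_of_lt (show m < j from by simp [hm, Fin.lt_def]; omega)
      · intro h
        exact hjm (π.injective (by rw [hy, h]))
    show xor b (decide ((i:ℕ) % 2 = 1)) ≠ xor b (decide ((j:ℕ) % 2 = 1))
    have huv : decide ((i:ℕ) % 2 = 1) ≠ decide ((j:ℕ) % 2 = 1) := by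
      rw [Ne, decide_eq_decide]
      intro h
      rcases Nat.mod_two_eq_zero_or_one (i:ℕ) with h' | h'
      · have := h.mpr (by omega); omega
      · have := h.mp h'; omega
    cases b <;> simpa using huv
  · -- fixed point free
    intro x h
    rw [show (sigOf π) x = π (shift2 n (π.symm x)) from rfl] at h
    exact shift2_ne hn (π.symm x) (by
      have := congrArg π.symm h
      simpa using this)
  · -- colors preserved
    intro x
    show xor b _ = xor b _
    rw [show (sigOf π) x = π (shift2 n (π.symm x)) from rfl]
    congr 1
    rw [Equiv.symm_apply_apply]
    rw [decide_eq_decide]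
    constructor
    · intro h; rw [← shift2_parity (π.symm x)]; exact h
    · intro h; rw [shift2_parity (π.symm x)]; exact h
  · -- descents
    have hiff : ∀ i : Fin n,
        (ordOf π (sigOf π (π i)) (π i) ∧ sigOf π (π i) ≠ π i) ↔ (i = a1 ∨ i = b1) := by
      intro i
      show (π.symm (sigOf π (π i)) ≤ π.symm (π i) ∧ sigOf π (π i) ≠ π i) ↔ _
      rw [show (sigOf π) (π i) = π (shift2 n (π.symm (π i))) from rfl, Equiv.symm_apply_apply,
        Equiv.symm_apply_apply, ← hwrap i]
      constructor
      · rintro ⟨hle, hne⟩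
        have hne' : shift2 n i ≠ i := fun h => hne (congrArg π h)
        exact (shift2_lt_iff hn i).mp (lt_of_le_of_ne hle hne')
      · intro h
        have hlt := (shift2_lt_iff hn i).mpr h
        exact ⟨le_of_lt hlt, fun hc => shift2_ne hn i (π.injective hc)⟩
    have e1 : {x : Fin n // ordOf π (sigOf π x) x ∧ sigOf π x ≠ x} ≃
        {i : Fin n // i = a1 ∨ i = b1} :=
      Equiv.subtypeEquiv π.symm (fun x => by
        have := hiff (π.symm x); rwa [Equiv.apply_symm_apply] at this)
    rw [Nat.card_congr e1]
    have : ∀ i : Fin n, (i = a1 ∨ i = b1) ↔ i ∈ ({a1, b1} : Set (Fin n)) := by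
      intro i; simp
    rw [Nat.card_congr (Equiv.subtypeEquivRight this), Nat.card_coe_set_eq,
      Set.ncard_pair hab]
  · -- ascents
    have hiff : ∀ i : Fin n,
        (ordOf π (π i) (sigOf π (π i)) ∧ π i ≠ sigOf π (π i)) ↔ ((i:ℕ) + 2 < n) := by
      intro i
      show (π.symm (π i) ≤ π.symm (sigOf π (π i)) ∧ π i ≠ sigOf π (π i)) ↔ _
      rw [show (sigOf π) (π i) = π (shift2 n (π.symm (π i))) from rfl, Equiv.symm_apply_apply,
        Equiv.symm_apply_apply]
      constructor
      · rintro ⟨hle, hne⟩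
        by_contra hc
        have hlt := (shift2_lt_iff hn i).mpr hc
        have : shift2 n i = i := le_antisymm (le_of_lt hlt) hle
        exact hne (congrArg π this.symm)
      · intro h
        have hlt : ¬ shift2 n i < i := fun hc => by
          have := (shift2_lt_iff hn i).mp hc; exact this h
        exact ⟨le_of_not_gt hlt, fun hc => shift2_ne hn i (π.injective hc.symm)⟩
    have e1 : {x : Fin n // ordOf π x (sigOf π x) ∧ x ≠ sigOf π x} ≃
        {i : Fin n // (i:ℕ) + 2 < n} :=
      Equiv.subtypeEquiv π.symm (fun x => by
        have := hiff (π.symm x); rwa [Equiv.apply_symm_apply] at this)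
    rw [Nat.card_congr e1]
    have this2 : ∀ i : Fin n, ((i:ℕ) + 2 < n) ↔ i ∈ (({a1, b1} : Set (Fin n))ᶜ) := by
      intro i
      simp only [Set.mem_compl_iff, Set.mem_insert_iff, Set.mem_singleton_iff]
      rw [← hwrap i]
      constructor
      · intro h hc; exact hc h
      · intro h; by_contra hc; exact h hc
    rw [Nat.card_congr (Equiv.subtypeEquivRight this2), Nat.card_coe_set_eq]
    have h1 := Set.ncard_add_ncard_compl ({a1, b1} : Set (Fin n))
    rw [Nat.card_eq_fintype_card, Fintype.card_fin, Set.ncard_pair hab] at h1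
    omega



lemma tau_eq {n : ℕ} (hn : 4 ≤ n) (τ : Equiv.Perm (Fin n))
    (hpar : ∀ i, (τ i : ℕ) % 2 = (i : ℕ) % 2)
    (hne : ∀ i, τ i ≠ i)
    (hcard : Nat.card {i : Fin n // τ i < i} = 2) :
    τ = (fun i => shift2 n i : Fin n → Fin n) := by
  -- the two top elements
  have h2 : (2:ℕ) ≤ n := by omega
  set a : Fin n := ⟨n - 2, by omega⟩ with ha
  set b : Fin n := ⟨n - 1, by omega⟩ with hb
  have hav : (a : ℕ) = n - 2 := rfl
  have hbv : (b : ℕ) = n - 1 := rfl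
  have hab : a ≠ b := by
    intro h; have := congrArg Fin.val h; rw [hav, hbv] at this; omega
  -- a and b are descents
  have hda : τ a < a := by
    rcases lt_trichotomy (τ a) a with h | h | h
    · exact h
    · exact absurd h (hne a)
    · -- τ a > a, so τ a = b, but parity differs
      have h1 : (a:ℕ) < (τ a : ℕ) := h
      have h2' : (τ a : ℕ) < n := (τ a).isLt
      rw [hav] at h1
      have h3 : (τ a : ℕ) = n - 1 := by omega
      have := hpar a
      rw [hav] at this
      omega
  have hdb : τ b < b := by
    rcases lt_trichotomy (τ b) b with h | h | h
    · exact h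
    · exact absurd h (hne b)
    · have h1 : (b:ℕ) < (τ b : ℕ) := h
      have h2' : (τ b : ℕ) < n := (τ b).isLt
      rw [hbv] at h1
      omega
  -- descents are exactly {a, b}
  have honly : ∀ i : Fin n, τ i < i → i = a ∨ i = b := by
    intro i hi
    by_contra hcon
    push_neg at hcon
    obtain ⟨hia, hib⟩ := hcon
    have hsub : ({i, a, b} : Set (Fin n)) ⊆ {j | τ j < j} := by
      intro x hx
      rcases hx with h | h | h
      · subst h; exact hi
      · subst h; exact hda
      · simp only [Set.mem_singleton_iff] at h; subst h; exact hdb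
    have h3 : ({i, a, b} : Set (Fin n)).ncard = 3 := by
      rw [Set.ncard_insert_of_notMem (by simp [hia, hib]),
        Set.ncard_pair hab]
    have hle : ({i, a, b} : Set (Fin n)).ncard ≤ ({j | τ j < j} : Set (Fin n)).ncard :=
      Set.ncard_le_ncard hsub (Set.toFinite _)
    have : ({j | τ j < j} : Set (Fin n)).ncard = 2 := by
      rw [← Nat.card_coe_set_eq]
      exact hcard
    omega
  -- hence non-top elements ascend
  have hasc : ∀ i : Fin n, (i : ℕ) + 2 < n → (i : ℕ) + 2 ≤ (τ i : ℕ) := by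
    intro i hi
    have hnd : ¬ τ i < i := by
      intro h
      rcases honly i h with h' | h' <;> (have := congrArg Fin.val h'; omega)
    have : i ≤ τ i := le_of_not_gt hnd
    have hlt : (i : ℕ) < (τ i : ℕ) := by
      rcases lt_or_eq_of_le this with h | h
      · exact h
      · exact absurd h.symm (hne i)
    have := hpar i
    omega
  -- main: by downward induction, τ i = i + 2 when possible
  have main : ∀ k (i : Fin n), n - (i : ℕ) ≤ k → (i : ℕ) + 2 < n → (τ i : ℕ) = (i : ℕ) + 2 := by
    intro k
    induction k with
    | zero => intro i h hi; have := i.isLt; omega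
    | succ k ih =>
      intro i h hi
      have h1 := hasc i hi
      rcases eq_or_lt_of_le h1 with he | hlt
      · omega
      · exfalso
        set m : ℕ := (τ i : ℕ) with hm
        have hmn : m < n := (τ i).isLt
        set j : Fin n := ⟨m - 2, by omega⟩ with hj
        have hji : (i : ℕ) < (j : ℕ) := by simp [hj]; omega
        have h2' : (j : ℕ) + 2 < n := by simp [hj]; omega
        have h3 : n - (j : ℕ) ≤ k := by simp [hj]; omega
        have h4 := ih j h3 h2'
        have : τ j = τ i := by
          apply Fin.ext
          simp [hj] at h4 ⊢
          omega
        have := τ.injective this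
        rw [this] at hji
        omega
  funext i
  by_cases hi : (i : ℕ) + 2 < n
  · exact Fin.ext (by rw [main (n - i) i le_rfl hi, shift2_val_of_lt hi])
  · -- i is a or b; τ i < 2
    have hilt : τ i < i := by
      rcases lt_trichotomy (τ i) i with h | h | h
      · exact h
      · exact absurd h (hne i)
      · exfalso
        have h1 : (i:ℕ) < (τ i : ℕ) := h
        have h2' : (τ i : ℕ) < n := (τ i).isLt
        have hp := hpar i
        omega
    have hlt2 : (τ i : ℕ) < 2 := by
      by_contra hcon
      push_neg at hcon
      set m : ℕ := (τ i : ℕ) with hm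
      have hmn : m < n := (τ i).isLt
      set j : Fin n := ⟨m - 2, by omega⟩ with hj
      have h2' : (j : ℕ) + 2 < n := by simp [hj]; omega
      have h4 := main (n - j) j le_rfl h2'
      have : τ j = τ i := by
        apply Fin.ext
        simp [hj] at h4 ⊢
        omega
      have hji := τ.injective this
      have := congrArg Fin.val hji
      simp [hj] at this
      have hii : (i:ℕ) = m - 2 := by omega
      have : (τ i : ℕ) < (i : ℕ) := hilt
      omega
    have hp := hpar i
    exact Fin.ext (by rw [shift2_val_of_ge hi]; omega)


section LinOf
noncomputable def linOf {α : Type*} (r : α → α → Prop) (h : IsLinearOrder α r) :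
    LinearOrder α :=
  haveI := h
  letI : DecidableRel r := Classical.decRel r
  letI P : PartialOrder α :=
    { le := r
      le_refl := fun a => refl_of r a
      le_trans := fun _ _ _ h1 h2 => trans_of r h1 h2
      le_antisymm := fun _ _ h1 h2 => antisymm_of r h1 h2 }
  { P with
    le_total := fun a b => total_of r a b
    toMin := minOfLe
    toMax := maxOfLe
    toDecidableLE := ‹DecidableRel r› }
end LinOf

lemma exists_orderIso {n : ℕ} (r : Fin n → Fin n → Prop) (hlin : IsLinearOrder (Fin n) r) :
    ∃ π : Perm (Fin n), ∀ a b : Fin n, r (π a) (π b) ↔ a ≤ b := by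
  have e := @monoEquivOfFin (Fin n) _ (linOf r hlin) n (Fintype.card_fin n)
  refine ⟨e.toEquiv, fun a b => ?_⟩
  have h2 := e.map_rel_iff (a := a) (b := b)
  constructor
  · intro h; exact h2.mp h
  · intro h; exact h2.mpr h

lemma F_surj {n : ℕ} (hn : 4 ≤ n)
    (t : (Fin n → Fin n → Prop) × Equiv.Perm (Fin n) × (Fin n → Bool))
    (ht : Pred19 t) : ∃ p : Perm (Fin n) × Bool, F p = t := by
  obtain ⟨r, σ, c⟩ := t
  obtain ⟨hlin, hcons, hfpf, hcolpres, hdesc, hasc⟩ := ht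
  simp only at hcons hfpf hcolpres hdesc hasc
  obtain ⟨π, hord⟩ := exists_orderIso r hlin
  have hord' : ∀ x y : Fin n, r x y ↔ π.symm x ≤ π.symm y := by
    intro x y
    have h1 := hord (π.symm x) (π.symm y)
    rwa [Equiv.apply_symm_apply, Equiv.apply_symm_apply] at h1
  -- consecutive positions
  have hcons' : ∀ i j : Fin n, (j : ℕ) = (i : ℕ) + 1 → c (π i) ≠ c (π j) := by
    intro i j hij
    apply hcons (π i) (π j)
    have hlt : i < j := by rw [Fin.lt_def]; omega
    refine ⟨⟨(hord i j).mpr (le_of_lt hlt), fun h => ?_⟩, ?_⟩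
    · have := π.injective h
      rw [this] at hlt
      exact lt_irrefl _ hlt
    · intro z ⟨⟨h1, h2⟩, h3, h4⟩
      have hz : π (π.symm z) = z := π.apply_symm_apply z
      rw [← hz] at h1 h2 h3 h4
      have hik : i < π.symm z :=
        lt_of_le_of_ne ((hord i _).mp h1) (fun h => h2 (congrArg π h))
      have hkj : π.symm z < j :=
        lt_of_le_of_ne ((hord _ j).mp h3) (fun h => h4 (congrArg π h))
      rw [Fin.lt_def] at hik hkj
      omega
  have h0 : (0 : ℕ) < n := by omega
  obtain ⟨b, hb⟩ : ∃ b : Bool, c (π ⟨0, h0⟩) = b := ⟨_, rfl⟩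
  have halt : ∀ i : Fin n, c (π i) = xor b (decide ((i : ℕ) % 2 = 1)) := by
    have key : ∀ k : ℕ, ∀ i : Fin n, (i : ℕ) = k →
        c (π i) = xor b (decide ((i : ℕ) % 2 = 1)) := by
      intro k
      induction k with
      | zero =>
        intro i hi
        have h2 : i = ⟨0, h0⟩ := Fin.ext hi
        rw [h2, hb]
        norm_num
      | succ k ih =>
        intro i hi
        have hkn : k < n := by have := i.isLt; omega
        have hne := hcons' ⟨k, hkn⟩ i (by rw [hi])
        have hcj := ih ⟨k, hkn⟩ rfl
        have hflip : c (π i) = !(c (π ⟨k, hkn⟩)) := by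
          cases h1 : c (π i) <;> cases h2 : c (π ⟨k, hkn⟩)
          · exact absurd (h1.trans h2.symm) (Ne.symm hne)
          · rfl
          · rfl
          · exact absurd (h2.trans h1.symm) hne
        rw [hflip, hcj]
        have hd : decide (((i:ℕ)) % 2 = 1) = !(decide (((⟨k, hkn⟩ : Fin n) :ℕ) % 2 = 1)) := by
          have hjv : ((⟨k, hkn⟩ : Fin n) : ℕ) = k := rfl
          rw [hjv, hi]
          rcases Nat.mod_two_eq_zero_or_one k with h' | h' <;>
            · have h2 : (k + 1) % 2 = 1 - k % 2 := by omega
              rw [h2, h']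
              norm_num
        rw [hd]
        cases b <;> cases (decide (((⟨k, hkn⟩ : Fin n):ℕ) % 2 = 1)) <;> rfl
    exact fun i => key (i : ℕ) i rfl
  -- the conjugated permutation
  obtain ⟨τ, hστ⟩ : ∃ τ : Perm (Fin n), ∀ i, σ (π i) = π (τ i) :=
    ⟨(π.trans σ).trans π.symm, fun i => (π.apply_symm_apply (σ (π i))).symm⟩
  have hτa : ∀ i, τ i = π.symm (σ (π i)) := by
    intro i
    rw [hστ, Equiv.symm_apply_apply]
  have hpar : ∀ i, (τ i : ℕ) % 2 = (i : ℕ) % 2 := by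
    intro i
    have h1 := hcolpres (π i)
    rw [hστ, halt, halt] at h1
    have h2 : decide ((τ i : ℕ) % 2 = 1) = decide ((i : ℕ) % 2 = 1) := by
      cases b <;> simpa using h1
    rw [decide_eq_decide] at h2
    omega
  have hne : ∀ i, τ i ≠ i := by
    intro i h
    exact hfpf (π i) (by rw [hστ, h])
  have hcardτ : Nat.card {i : Fin n // τ i < i} = 2 := by
    rw [← hdesc]
    apply Nat.card_congr
    refine (Equiv.subtypeEquiv π.symm (fun x => ?_)).symm
    have hx : π (π.symm x) = x := π.apply_symm_apply x
    constructor
    · rintro ⟨h1, h2⟩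
      have hle : τ (π.symm x) ≤ π.symm x := by
        rw [hτa, hx]
        exact (hord' (σ x) x).mp h1
      refine lt_of_le_of_ne hle (fun h => ?_)
      rw [hτa, hx] at h
      exact h2 (π.symm.injective h)
    · intro h1
      rw [hτa, hx] at h1
      constructor
      · exact (hord' (σ x) x).mpr (le_of_lt h1)
      · intro h
        rw [h] at h1
        simp at h1
  have hτeq := tau_eq hn τ hpar hne hcardτ
  refine ⟨(π, b), ?_⟩
  have hr : ordOf π = r := by
    funext x y
    exact propext (hord' x y).symm
  have hσ : sigOf π = σ := by
    apply Equiv.ext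
    intro x
    rw [show (sigOf π) x = π (shift2 n (π.symm x)) from rfl]
    have h1 : τ (π.symm x) = shift2 n (π.symm x) := congrFun hτeq (π.symm x)
    rw [← h1, ← hστ, Equiv.apply_symm_apply]
  have hc : colOf π b = c := by
    funext x
    show xor b (decide ((π.symm x : ℕ) % 2 = 1)) = c x
    rw [← halt (π.symm x), Equiv.apply_symm_apply]
  show (ordOf π, sigOf π, colOf π b) = (r, σ, c)
  rw [hr, hσ, hc]

lemma F_inj {n : ℕ} (hn : 4 ≤ n) : Function.Injective (F (n := n)) := by
  rintro ⟨π, b⟩ ⟨π', b'⟩ h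
  have h1 : ordOf π = ordOf π' := congrArg Prod.fst h
  have h3 : colOf π b = colOf π' b' := congrArg (fun t => t.2.2) h
  have hππ' : π = π' := by
    have key : ∀ a b : Fin n, π'.symm (π a) ≤ π'.symm (π b) ↔ a ≤ b := by
      intro a b
      have h2 := congrFun (congrFun h1 (π a)) (π b)
      simp only [ordOf, Equiv.symm_apply_apply] at h2
      exact (iff_of_eq h2).symm
    have hφ : ({ toEquiv := π.trans π'.symm
                 map_rel_iff' := @fun a b => key a b } : Fin n ≃o Fin n) =
        OrderIso.refl (Fin n) := Subsingleton.elim _ _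
    have h4 : π.trans π'.symm = Equiv.refl (Fin n) :=
      congrArg (fun (o : Fin n ≃o Fin n) => o.toEquiv) hφ
    apply Equiv.ext
    intro a
    have h5 : π'.symm (π a) = a := congrFun (congrArg (fun (e : Fin n ≃ Fin n) => ⇑e) h4) a
    have h6 := congrArg π' h5
    rwa [Equiv.apply_symm_apply] at h6
  subst hππ'
  have h0 : (0 : ℕ) < n := by omega
  have h6 := congrFun h3 (π ⟨0, h0⟩)
  simp only [colOf, Equiv.symm_apply_apply] at h6
  norm_num at h6
  rw [h6]

theorem main {n : ℕ} (hn : 4 ≤ n) :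
    Nat.card {t : (Fin n → Fin n → Prop) × Equiv.Perm (Fin n) × (Fin n → Bool) // Pred19 t} =
      2 * Nat.factorial n := by
  have hbij : Function.Bijective (fun p : Perm (Fin n) × Bool =>
      (⟨F p, F_mem hn p.1 p.2⟩ : {t // Pred19 t})) := by
    constructor
    · intro p q hpq
      exact F_inj hn (congrArg Subtype.val hpq)
    · rintro ⟨t, ht⟩
      obtain ⟨p, hp⟩ := F_surj hn t ht
      exact ⟨p, Subtype.ext hp⟩
  rw [← Nat.card_congr (Equiv.ofBijective _ hbij)]
  rw [Nat.card_eq_fintype_card, Fintype.card_prod, Fintype.card_perm, Fintype.card_fin,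
    Fintype.card_bool, mul_comm]

end Stmt19Aux


/-- The predecessor-of-predecessor theory has exactly `2·n!` models: the number of triples
`(≤, σ, c)` on an `n`-element set (`n ≥ 4`), where `≤` is a linear order (with strict part
`lt`), `c` is a 2-coloring in which `≤`-consecutive elements get different colors, and `σ` is
a fixed-point-free permutation preserving the coloring, with exactly two descents `σ x < x`,
admitting a sub-relation of size `n - 2` contained in `{(x, σ x) : x < σ x}`, is `2 · n!`. -/
theorem stmt19 (n : ℕ) (hn : 4 ≤ n) :
    Nat.card {t : (Fin n → Fin n → Prop) × Equiv.Perm (Fin n) × (Fin n → Bool) //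
      IsLinearOrder (Fin n) t.1 ∧
      -- consecutive elements of the order get different colors
      (∀ x y : Fin n,
        ((t.1 x y ∧ x ≠ y) ∧ ∀ z, ¬ ((t.1 x z ∧ x ≠ z) ∧ (t.1 z y ∧ z ≠ y))) →
        t.2.2 x ≠ t.2.2 y) ∧
      (∀ x, t.2.1 x ≠ x) ∧
      (∀ x, t.2.2 (t.2.1 x) = t.2.2 x) ∧
      Nat.card {x : Fin n // t.1 (t.2.1 x) x ∧ t.2.1 x ≠ x} = 2 ∧
      n - 2 ≤ Nat.card {x : Fin n // t.1 x (t.2.1 x) ∧ x ≠ t.2.1 x}} =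
    2 * Nat.factorial n :=
  Stmt19Aux.main hn
end
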